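/- arXiv:1101.5982 — 2 statements merged into one kernel-verified Lean document; each statement's English description precedes it below -/
import Mathlib

section
/- Let T be a Tambara functor on a finite group G. Every maximal ideal 𝔪 ⊊ T is prime. -/
set_option autoImplicit false

/-! Finite G-sets -/

structure GSet (G : Type) [Group G] : Type 1 where
  carrier : Type
  [mulAction : MulAction G carrier]
  [finite : Finite carrier]

attribute [instance] GSet.mulAction GSet.finite

/-- Equivariant maps of finite `G`-sets. -/
structure GSetHom {G : Type} [Group G] (X Y : GSet G) : Type where
  toFun : X.carrier → Y.carrier
  map_smul : ∀ (g : G) (x : X.carrier), toFun (g • x) = g • toFun x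

namespace GSetHom

variable {G : Type} [Group G]

def id (X : GSet G) : GSetHom X X := ⟨fun x => x, fun _ _ => rfl⟩

def comp {X Y Z : GSet G} (g : GSetHom Y Z) (f : GSetHom X Y) : GSetHom X Z :=
  ⟨fun x => g.toFun (f.toFun x), fun a x => by
    show g.toFun (f.toFun (a • x)) = a • g.toFun (f.toFun x)
    rw [f.map_smul, g.map_smul]⟩

end GSetHom

namespace GSet

variable {G : Type} [Group G]

/-- Binary disjoint union of `G`-sets. -/
def sum (X Y : GSet G) : GSet G where
  carrier := X.carrier ⊕ Y.carrier

def inl (X Y : GSet G) : GSetHom X (X.sum Y) := ⟨Sum.inl, fun _ _ => rfl⟩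

def inr (X Y : GSet G) : GSetHom Y (X.sum Y) := ⟨Sum.inr, fun _ _ => rfl⟩

instance : MulAction G Empty where
  smul _ x := x.elim
  one_smul x := x.elim
  mul_smul _ _ x := x.elim

/-- The empty `G`-set. -/
def empty (G : Type) [Group G] : GSet G where
  carrier := Empty

/-- Finite disjoint unions of `G`-sets. -/
def sigma {n : ℕ} (Xs : Fin n → GSet G) : GSet G where
  carrier := Σ i, (Xs i).carrier

def sigmaIncl {n : ℕ} (Xs : Fin n → GSet G) (i : Fin n) : GSetHom (Xs i) (sigma Xs) :=
  ⟨fun x => ⟨i, x⟩, fun _ _ => rfl⟩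

/-- The canonical pullback of two `G`-maps. -/
def pullback {X Y Z : GSet G} (f : GSetHom X Z) (g : GSetHom Y Z) : GSet G where
  carrier := { q : X.carrier × Y.carrier // f.toFun q.1 = g.toFun q.2 }
  mulAction :=
  { smul := fun a q => ⟨a • q.val, by
      show f.toFun (a • q.val.1) = g.toFun (a • q.val.2)
      rw [f.map_smul, g.map_smul, q.property]⟩
    one_smul := fun q => Subtype.ext (one_smul G q.val)
    mul_smul := fun a b q => Subtype.ext (mul_smul a b q.val) }

def pbFst {X Y Z : GSet G} (f : GSetHom X Z) (g : GSetHom Y Z) :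
    GSetHom (pullback f g) X := ⟨fun q => q.val.1, fun _ _ => rfl⟩

def pbSnd {X Y Z : GSet G} (f : GSetHom X Z) (g : GSetHom Y Z) :
    GSetHom (pullback f g) Y := ⟨fun q => q.val.2, fun _ _ => rfl⟩

/-- The complement of the image of a `G`-map, as a `G`-set. -/
def compl {X Y : GSet G} (f : GSetHom X Y) : GSet G where
  carrier := { y : Y.carrier // ∀ x, f.toFun x ≠ y }
  mulAction :=
  { smul := fun g y => ⟨g • y.val, fun x h => y.property (g⁻¹ • x) (by
      rw [f.map_smul, h, inv_smul_smul])⟩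
    one_smul := fun y => Subtype.ext (one_smul G y.val)
    mul_smul := fun a b y => Subtype.ext (mul_smul a b y.val) }

def complIncl {X Y : GSet G} (f : GSetHom X Y) : GSetHom (compl f) Y :=
  ⟨fun y => y.val, fun _ _ => rfl⟩

/-- Points of Tambara's dependent product `Π_f(A)`: pairs `(y, σ)` of a point `y : Y`
and a section `σ` of `p` on the fiber `f⁻¹(y)` (encoded as an `Option`-valued function
supported exactly on the fiber). -/
def PiProp {X Y A : GSet G} (f : GSetHom X Y) (p : GSetHom A X)
    (s : Y.carrier × (X.carrier → Option A.carrier)) : Prop :=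
  (∀ x, (s.2 x).isSome = true ↔ f.toFun x = s.1) ∧
  (∀ x a, s.2 x = some a → p.toFun a = x)

def PiCar {X Y A : GSet G} (f : GSetHom X Y) (p : GSetHom A X) : Type :=
  { s : Y.carrier × (X.carrier → Option A.carrier) // PiProp f p s }

instance optionFinite {α : Type} [Finite α] : Finite (Option α) :=
  Finite.of_equiv _ (Equiv.optionEquivSumPUnit.{0,0} α).symm

instance piFinite {X Y A : GSet G} (f : GSetHom X Y) (p : GSetHom A X) :
    Finite (PiCar f p) := by
  unfold PiCar; infer_instance

def piSmul {X Y A : GSet G} (f : GSetHom X Y) (p : GSetHom A X) (g : G)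
    (s : PiCar f p) : PiCar f p :=
  ⟨(g • s.val.1, fun x => (s.val.2 (g⁻¹ • x)).map (g • ·)), by
    constructor
    · intro x
      rw [Option.isSome_map, s.property.1 (g⁻¹ • x), f.map_smul]
      constructor
      · intro h; rw [← h, smul_inv_smul]
      · intro h; rw [h, inv_smul_smul]
    · intro x a ha
      rcases Option.map_eq_some_iff.mp ha with ⟨b, hb, rfl⟩
      rw [p.map_smul, s.property.2 _ _ hb, smul_inv_smul]⟩

instance piAction {X Y A : GSet G} (f : GSetHom X Y) (p : GSetHom A X) :
    MulAction G (PiCar f p) where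
  smul := piSmul f p
  one_smul s := by
    apply Subtype.ext
    refine Prod.ext (one_smul G s.val.1) ?_
    funext x
    show (s.val.2 ((1:G)⁻¹ • x)).map ((1:G) • ·) = s.val.2 x
    rw [inv_one, one_smul]
    cases h : s.val.2 x <;> simp [one_smul]
  mul_smul a b s := by
    apply Subtype.ext
    refine Prod.ext (mul_smul a b s.val.1) ?_
    funext x
    show (s.val.2 ((a * b)⁻¹ • x)).map ((a * b) • ·)
        = ((s.val.2 (b⁻¹ • (a⁻¹ • x))).map (b • ·)).map (a • ·)
    rw [Option.map_map, mul_inv_rev, mul_smul]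
    cases h : s.val.2 (b⁻¹ • a⁻¹ • x) <;> simp [mul_smul, Function.comp]

/-- Tambara's dependent product `Π_f(A)` as a `G`-set. -/
def piObj {X Y A : GSet G} (f : GSetHom X Y) (p : GSetHom A X) : GSet G where
  carrier := PiCar f p

/-- The projection `π : Π_f(A) → Y`. -/
def piPr {X Y A : GSet G} (f : GSetHom X Y) (p : GSetHom A X) :
    GSetHom (piObj f p) Y := ⟨fun s => s.val.1, fun _ _ => rfl⟩

theorem optGet {α : Type} {o : Option α} {a : α} (h : o = some a) :
    ∀ hs : o.isSome = true, o.get hs = a := by subst h; intro _; rfl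

/-- The evaluation map `λ : X ×_Y Π_f(A) → A`, `(x, (y, σ)) ↦ σ(x)`. -/
def piEval {X Y A : GSet G} (f : GSetHom X Y) (p : GSetHom A X) :
    GSetHom (pullback f (piPr f p)) A where
  toFun z := (z.val.2.val.2 z.val.1).get (by
    rw [z.val.2.property.1 z.val.1]; exact z.property)
  map_smul g z := by
    have hs : (z.val.2.val.2 z.val.1).isSome = true := by
      rw [z.val.2.property.1 z.val.1]; exact z.property
    obtain ⟨a, ha⟩ := Option.isSome_iff_exists.mp hs
    have h1 : z.val.2.val.2 z.val.1 = some a := ha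
    have h2 : (g • z).val.2.val.2 (g • z).val.1 = some (g • a) := by
      show (z.val.2.val.2 (g⁻¹ • (g • z.val.1))).map (g • ·) = some (g • a)
      rw [inv_smul_smul, h1]; rfl
    simp only [optGet h2, optGet h1]

end GSet

namespace GSet

/-- A transitive (nonempty) finite `G`-set. -/
def IsTransitive {G : Type} [Group G] (X : GSet G) : Prop :=
  Nonempty X.carrier ∧ MulAction.IsPretransitive G X.carrier

end GSet

/-! Tambara functors -/

/-- The underlying system of commutative rings of a Tambara functor. -/
structure TamData (G : Type) [Group G] : Type 1 where
  obj : GSet G → Type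
  ring : ∀ X, CommRing (obj X)

attribute [instance] TamData.ring

/-- A Tambara functor on the finite group `G`: a system of commutative rings `obj X`
indexed by finite `G`-sets, together with restrictions `res`, additive transfers `tr`
and multiplicative transfers `nm`, functorial, additive, satisfying the Mackey
base-change conditions, the projection formula, and Tambara's distributive law. -/
structure TambaraFunctor (G : Type) [Group G] extends TamData G where
  res : ∀ {X Y : GSet G}, GSetHom X Y → (obj Y →+* obj X)
  tr : ∀ {X Y : GSet G}, GSetHom X Y → (obj X →+ obj Y)
  nm : ∀ {X Y : GSet G}, GSetHom X Y → (obj X →* obj Y)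
  res_id : ∀ {X : GSet G} (x : obj X), res (GSetHom.id X) x = x
  res_comp : ∀ {X Y Z : GSet G} (f : GSetHom X Y) (g : GSetHom Y Z) (z : obj Z),
    res f (res g z) = res (g.comp f) z
  tr_id : ∀ {X : GSet G} (x : obj X), tr (GSetHom.id X) x = x
  tr_comp : ∀ {X Y Z : GSet G} (f : GSetHom X Y) (g : GSetHom Y Z) (x : obj X),
    tr g (tr f x) = tr (g.comp f) x
  nm_id : ∀ {X : GSet G} (x : obj X), nm (GSetHom.id X) x = x
  nm_comp : ∀ {X Y Z : GSet G} (f : GSetHom X Y) (g : GSetHom Y Z) (x : obj X),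
    nm g (nm f x) = nm (g.comp f) x
  /-- additivity on binary disjoint unions -/
  add_bij : ∀ X Y : GSet G, Function.Bijective
    (fun t : obj (X.sum Y) => (res (GSet.inl X Y) t, res (GSet.inr X Y) t))
  /-- `T(∅)` is the zero ring -/
  empty_subsingleton : ∀ x y : obj (GSet.empty G), x = y
  /-- Mackey base change for the additive transfer -/
  tr_bc : ∀ {X Y Z : GSet G} (f : GSetHom X Z) (g : GSetHom Y Z) (x : obj X),
    res g (tr f x) = tr (GSet.pbSnd f g) (res (GSet.pbFst f g) x)
  /-- Mackey base change for the multiplicative transfer -/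
  nm_bc : ∀ {X Y Z : GSet G} (f : GSetHom X Z) (g : GSetHom Y Z) (x : obj X),
    res g (nm f x) = nm (GSet.pbSnd f g) (res (GSet.pbFst f g) x)
  /-- the projection formula -/
  proj_formula : ∀ {X Y : GSet G} (f : GSetHom X Y) (a : obj X) (b : obj Y),
    tr f (a * res f b) = tr f a * b
  /-- the norm of zero is the additive transfer of `1` from the complement of the image -/
  nm_zero : ∀ {X Y : GSet G} (f : GSetHom X Y), nm f (0 : obj X) = tr (GSet.complIncl f) 1
  /-- Tambara's distributive law, via the canonical exponential diagram on `Π_f(A)` -/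
  distrib : ∀ {X Y A : GSet G} (f : GSetHom X Y) (p : GSetHom A X) (a : obj A),
    nm f (tr p a) = tr (GSet.piPr f p)
      (nm (GSet.pbSnd f (GSet.piPr f p)) (res (GSet.piEval f p) a))

namespace TambaraFunctor

variable {G : Type} [Group G]

/-- `f_!(x) = f_•(x) - f_•(0)`. -/
def shriek (T : TambaraFunctor G) {X Y : GSet G} (f : GSetHom X Y) (x : T.obj X) :
    T.obj Y := T.nm f x - T.nm f 0

end TambaraFunctor

/-- A morphism of Tambara functors: a family of ring homomorphisms natural with respect
to restrictions, additive transfers and multiplicative transfers. -/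
structure TamHom {G : Type} [Group G] (T S : TambaraFunctor G) where
  app : ∀ X : GSet G, T.obj X →+* S.obj X
  app_res : ∀ {X Y : GSet G} (f : GSetHom X Y) (y : T.obj Y),
    app X (T.res f y) = S.res f (app Y y)
  app_tr : ∀ {X Y : GSet G} (f : GSetHom X Y) (x : T.obj X),
    app Y (T.tr f x) = S.tr f (app X x)
  app_nm : ∀ {X Y : GSet G} (f : GSetHom X Y) (x : T.obj X),
    app Y (T.nm f x) = S.nm f (app X x)

namespace TambaraFunctor

variable {G : Type} [Group G]

/-- An ideal of a Tambara functor: a family of ideals closed under restrictions,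
additive transfers, and satisfying `f_•(𝔦(X)) ⊆ f_•(0) + 𝔦(Y)`
(equivalently, closed under `f_!`). -/
structure IsIdeal (T : TambaraFunctor G) (I : ∀ X : GSet G, Ideal (T.obj X)) : Prop where
  res_mem : ∀ {X Y : GSet G} (f : GSetHom X Y) {y : T.obj Y}, y ∈ I Y → T.res f y ∈ I X
  tr_mem : ∀ {X Y : GSet G} (f : GSetHom X Y) {x : T.obj X}, x ∈ I X → T.tr f x ∈ I Y
  shriek_mem : ∀ {X Y : GSet G} (f : GSetHom X Y) {x : T.obj X},
    x ∈ I X → T.shriek f x ∈ I Y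

/-- The ideal generated by a family of subsets: the intersection of all ideals
containing it. -/
def gen (T : TambaraFunctor G) (S : ∀ X : GSet G, Set (T.obj X)) (X : GSet G) :
    Ideal (T.obj X) :=
  ⨅ (I : ∀ Y : GSet G, Ideal (T.obj Y)) (_ : T.IsIdeal I) (_ : ∀ Y, S Y ⊆ ↑(I Y)), I X

/-- The family of subsets consisting of the single element `a ∈ T(A)`. -/
def single (T : TambaraFunctor G) (A : GSet G) (a : T.obj A) (X : GSet G) :
    Set (T.obj X) := { x | ∃ h : A = X, h ▸ a = x }

/-- The principal ideal `⟨a⟩` generated by `a ∈ T(A)`. -/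
def principal (T : TambaraFunctor G) (A : GSet G) (a : T.obj A) :
    ∀ X : GSet G, Ideal (T.obj X) := T.gen (T.single A a)

/-- The defining set of the product of two ideals. -/
def mulSet (T : TambaraFunctor G) (I J : ∀ X : GSet G, Ideal (T.obj X)) (X : GSet G) :
    Set (T.obj X) :=
  { x | ∃ (A : GSet G) (p : GSetHom A X) (a b : T.obj A),
      a ∈ I A ∧ b ∈ J A ∧ x = T.tr p (a * b) }

/-- The product of two ideals of a Tambara functor. -/
def mulIdl (T : TambaraFunctor G) (I J : ∀ X : GSet G, Ideal (T.obj X)) (X : GSet G) :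
    Ideal (T.obj X) := Ideal.span (T.mulSet I J X)

/-- Iterated products of ideals. -/
def mulMulti (T : TambaraFunctor G) :
    List (∀ X : GSet G, Ideal (T.obj X)) → ∀ X : GSet G, Ideal (T.obj X)
  | [] => fun _ => ⊤
  | I :: ls => T.mulIdl I (T.mulMulti ls)

/-- A prime ideal of a Tambara functor. -/
structure IsPrime (T : TambaraFunctor G) (P : ∀ X : GSet G, Ideal (T.obj X)) : Prop where
  isIdeal : T.IsIdeal P
  ne_top : ∃ X : GSet G, P X ≠ ⊤
  mem_or_mem : ∀ {X Y : GSet G}, X.IsTransitive → Y.IsTransitive →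
    ∀ {a : T.obj X} {b : T.obj Y},
      (∀ Z : GSet G, T.mulIdl (T.principal X a) (T.principal Y b) Z ≤ P Z) →
      a ∈ P X ∨ b ∈ P Y

/-- A maximal ideal of a Tambara functor. -/
structure IsMaximal (T : TambaraFunctor G) (M : ∀ X : GSet G, Ideal (T.obj X)) : Prop where
  isIdeal : T.IsIdeal M
  ne_top : ∃ X : GSet G, M X ≠ ⊤
  eq_of_le : ∀ K : ∀ X : GSet G, Ideal (T.obj X), T.IsIdeal K →
    (∀ X, M X ≤ K X) → (K = M ∨ ∀ X, K X = ⊤)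

end TambaraFunctor

namespace GSet

/-- The `G`-set `G/e`, i.e. `G` with the left regular action. -/
def regular (G : Type) [Group G] [Finite G] : GSet G where
  carrier := G

/-- Right multiplication `G/e → G/e`, an equivariant map. -/
def rightMul {G : Type} [Group G] [Finite G] (g : G) :
    GSetHom (regular G) (regular G) :=
  ⟨fun x => (id x : G) * g, fun a x => mul_assoc a x g⟩

end GSet

section AuxTambara

variable {G : Type} [Group G]

private theorem ghext {X Y : GSet G} {f g : GSetHom X Y} (h : f.toFun = g.toFun) : f = g := by
  obtain ⟨tf, mf⟩ := f; obtain ⟨tg, mg⟩ := g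
  have h' : tf = tg := h
  subst h'
  rfl

private theorem obj_eq (T : TambaraFunctor G) {Z : GSet G} (hZ : IsEmpty Z.carrier)
    (u v : T.obj Z) : u = v := by
  obtain ⟨t, ht⟩ := (T.add_bij Z Z).2 (u, v)
  have h12 : GSet.inl Z Z = GSet.inr Z Z := ghext (funext fun z => hZ.elim z)
  have hu : T.res (GSet.inl Z Z) t = u := congrArg Prod.fst ht
  have hv : T.res (GSet.inr Z Z) t = v := congrArg Prod.snd ht
  rw [← hu, ← hv, h12]

private theorem nm_surj_zero (T : TambaraFunctor G) {A B : GSet G} (f : GSetHom A B)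
    (hf : Function.Surjective f.toFun) : T.nm f 0 = 0 := by
  have hemp : IsEmpty (GSet.compl f).carrier := by
    constructor; rintro ⟨y, hy⟩
    obtain ⟨x, hx⟩ := hf y
    exact hy x hx
  rw [T.nm_zero, obj_eq T hemp 1 0, map_zero]

private theorem res_nm_empty (T : TambaraFunctor G) {A B Q : GSet G}
    (i : GSetHom A Q) (j : GSetHom B Q)
    (hemp : IsEmpty (GSet.pullback i j).carrier) (w : T.obj A) :
    T.res j (T.nm i w) = 1 := by
  rw [T.nm_bc i j w, obj_eq T hemp (T.res (GSet.pbFst i j) w) 1, map_one]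

private theorem res_tr_empty (T : TambaraFunctor G) {A B Q : GSet G}
    (i : GSetHom A Q) (j : GSetHom B Q)
    (hemp : IsEmpty (GSet.pullback i j).carrier) (w : T.obj A) :
    T.res j (T.tr i w) = 0 := by
  rw [T.tr_bc i j w, obj_eq T hemp (T.res (GSet.pbFst i j) w) 0, map_zero]

/-- The diagonal map into the self-pullback. -/
private def dMap {A Q : GSet G} (i : GSetHom A Q) : GSetHom A (GSet.pullback i i) :=
  ⟨fun a => ⟨(a, a), rfl⟩, fun g a => rfl⟩

private theorem d_surj {A Q : GSet G} (i : GSetHom A Q) (hi : Function.Injective i.toFun) :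
    Function.Surjective (dMap i).toFun :=
  fun δ => ⟨δ.val.1, Subtype.ext (Prod.ext rfl (hi δ.property))⟩

private theorem k_eq_d {A Q : GSet G} (i : GSetHom A Q) (hi : Function.Injective i.toFun) :
    GSet.pbFst i i = GSet.pbSnd i i :=
  ghext (funext fun δ => hi δ.property)

private theorem kd_id {A Q : GSet G} (i : GSetHom A Q) :
    (GSet.pbSnd i i).comp (dMap i) = GSetHom.id A := ghext rfl

private theorem dk_id {A Q : GSet G} (i : GSetHom A Q) (hi : Function.Injective i.toFun) :
    (dMap i).comp (GSet.pbSnd i i) = GSetHom.id (GSet.pullback i i) :=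
  ghext (funext fun δ => Subtype.ext (Prod.ext (hi δ.property).symm rfl))

/-- The "norm-twist-corrected" element. -/
private def innerT (T : TambaraFunctor G) {A Q : GSet G} (i : GSetHom A Q) (v : T.obj A) :
    T.obj A :=
  T.res (dMap i) (T.nm (dMap i) v)

private theorem inner_zero (T : TambaraFunctor G) {A Q : GSet G} (i : GSetHom A Q)
    (hi : Function.Injective i.toFun) : innerT T i 0 = 0 := by
  unfold innerT
  rw [nm_surj_zero T (dMap i) (d_surj i hi), map_zero]

private theorem inner_mem (T : TambaraFunctor G) {A Q : GSet G} (i : GSetHom A Q)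
    {I : ∀ X : GSet G, Ideal (T.obj X)} (hI : T.IsIdeal I)
    (hi : Function.Injective i.toFun) {v : T.obj A} (hv : v ∈ I A) :
    innerT T i v ∈ I A := by
  have h0 : T.nm (dMap i) v = T.shriek (dMap i) v := by
    unfold TambaraFunctor.shriek
    rw [nm_surj_zero T (dMap i) (d_surj i hi), sub_zero]
  unfold innerT
  rw [h0]
  exact hI.res_mem _ (hI.shriek_mem _ hv)

private theorem res_nm_inner_self (T : TambaraFunctor G) {A Q : GSet G} (i : GSetHom A Q)
    (hi : Function.Injective i.toFun) (v : T.obj A) :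
    T.res i (T.nm i (innerT T i v)) = v := by
  rw [T.nm_bc i i _, k_eq_d i hi]
  unfold innerT
  rw [T.res_comp, dk_id i hi, T.res_id, T.nm_comp, kd_id i, T.nm_id]

/-- Core lemma: norm along `g` of an element of `T(Q)` where `Q` decomposes as the
disjoint union of the images of `il` and `ir`. -/
private theorem core (T : TambaraFunctor G) {I J : ∀ X : GSet G, Ideal (T.obj X)}
    (hI : T.IsIdeal I) (hJ : T.IsIdeal J)
    {A B Q V : GSet G} (il : GSetHom A Q) (ir : GSetHom B Q) (g : GSetHom Q V)
    (hbij : Function.Bijective (Sum.elim il.toFun ir.toFun : A.carrier ⊕ B.carrier → Q.carrier))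
    (z : T.obj Q) (hzl : T.res il z ∈ I A) (hzr : T.res ir z ∈ J B) :
    T.nm g z - T.nm g 0 ∈ I V ⊔ J V := by
  classical
  have hil : Function.Injective il.toFun := fun a a' h =>
    Sum.inl.inj (hbij.1 (a₁ := Sum.inl a) (a₂ := Sum.inl a') h)
  have hir : Function.Injective ir.toFun := fun b b' h =>
    Sum.inr.inj (hbij.1 (a₁ := Sum.inr b) (a₂ := Sum.inr b') h)
  have hdisj1 : IsEmpty (GSet.pullback il ir).carrier := by
    constructor; rintro ⟨⟨a, b⟩, hab⟩
    exact Sum.inl_ne_inr (hbij.1 (a₁ := Sum.inl a) (a₂ := Sum.inr b) hab)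
  have hdisj2 : IsEmpty (GSet.pullback ir il).carrier := by
    constructor; rintro ⟨⟨b, a⟩, hab⟩
    exact Sum.inr_ne_inl (hbij.1 (a₁ := Sum.inr b) (a₂ := Sum.inl a) hab)
  -- joint injectivity of the two restrictions
  have joint : ∀ z1 z2 : T.obj Q,
      T.res il z1 = T.res il z2 → T.res ir z1 = T.res ir z2 → z1 = z2 := by
    intro z1 z2 h1 h2
    have hsm : ∀ (gg : G) (s : (A.sum B).carrier),
        Sum.elim il.toFun ir.toFun (gg • s) = gg • Sum.elim il.toFun ir.toFun s := by
      rintro gg (a | b)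
      · exact il.map_smul gg a
      · exact ir.map_smul gg b
    let e : GSetHom (A.sum B) Q := ⟨Sum.elim il.toFun ir.toFun, hsm⟩
    let ψ : Q.carrier → (A.sum B).carrier := (Equiv.ofBijective _ hbij).symm
    have hψ : ∀ q, Sum.elim il.toFun ir.toFun (ψ q) = q := fun q =>
      (Equiv.ofBijective _ hbij).apply_symm_apply q
    let e' : GSetHom Q (A.sum B) := ⟨ψ, by
      intro gg q
      apply hbij.1
      show Sum.elim il.toFun ir.toFun (ψ (gg • q)) = Sum.elim il.toFun ir.toFun (gg • ψ q)
      rw [hψ, hsm gg (ψ q), hψ]⟩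
    have hee' : e.comp e' = GSetHom.id Q := ghext (funext fun q => hψ q)
    have hinl : e.comp (GSet.inl A B) = il := ghext rfl
    have hinr : e.comp (GSet.inr A B) = ir := ghext rfl
    have hres : T.res e z1 = T.res e z2 := by
      apply (T.add_bij A B).1
      show (T.res (GSet.inl A B) (T.res e z1), T.res (GSet.inr A B) (T.res e z1))
         = (T.res (GSet.inl A B) (T.res e z2), T.res (GSet.inr A B) (T.res e z2))
      rw [T.res_comp, T.res_comp, T.res_comp, T.res_comp, hinl, hinr, h1, h2]
    calc z1 = T.res (GSetHom.id Q) z1 := (T.res_id z1).symm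
      _ = T.res e' (T.res e z1) := by rw [T.res_comp, hee']
      _ = T.res e' (T.res e z2) := by rw [hres]
      _ = T.res (GSetHom.id Q) z2 := by rw [T.res_comp, hee']
      _ = z2 := T.res_id z2
  -- multiplicative decomposition of z and of 0
  have hfact : z = T.nm il (innerT T il (T.res il z)) * T.nm ir (innerT T ir (T.res ir z)) := by
    apply joint
    · rw [map_mul, res_nm_inner_self T il hil, res_nm_empty T ir il hdisj2, mul_one]
    · rw [map_mul, res_nm_inner_self T ir hir, res_nm_empty T il ir hdisj1, one_mul]
  have hzero : (0 : T.obj Q) = T.nm il (innerT T il 0) * T.nm ir (innerT T ir 0) := by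
    apply joint
    · rw [map_mul, res_nm_inner_self T il hil, res_nm_empty T ir il hdisj2, mul_one, map_zero]
    · rw [map_mul, res_nm_inner_self T ir hir, res_nm_empty T il ir hdisj1, one_mul, map_zero]
  have e1 : T.nm g z
      = T.nm (g.comp il) (innerT T il (T.res il z)) * T.nm (g.comp ir) (innerT T ir (T.res ir z)) := by
    conv_lhs => rw [hfact]
    rw [map_mul, T.nm_comp, T.nm_comp]
  have e2 : T.nm g 0 = T.nm (g.comp il) 0 * T.nm (g.comp ir) 0 := by
    conv_lhs => rw [hzero]
    rw [map_mul, T.nm_comp, T.nm_comp, inner_zero T il hil, inner_zero T ir hir]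
  have hPl : T.shriek (g.comp il) (innerT T il (T.res il z)) ∈ I V :=
    hI.shriek_mem _ (inner_mem T il hI hil hzl)
  have hPr : T.shriek (g.comp ir) (innerT T ir (T.res ir z)) ∈ J V :=
    hJ.shriek_mem _ (inner_mem T ir hJ hir hzr)
  have keyeq : T.nm g z - T.nm g 0
      = T.nm (g.comp il) (innerT T il (T.res il z))
          * T.shriek (g.comp ir) (innerT T ir (T.res ir z))
        + T.shriek (g.comp il) (innerT T il (T.res il z)) * T.nm (g.comp ir) 0 := by
    rw [e1, e2]
    unfold TambaraFunctor.shriek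
    ring
  rw [keyeq]
  exact Submodule.add_mem _
    (Submodule.mem_sup_right (Ideal.mul_mem_left _ _ hPr))
    (Submodule.mem_sup_left (Ideal.mul_mem_right _ _ hPl))

private theorem norm_res_tr_mem (T : TambaraFunctor G) {I J : ∀ X : GSet G, Ideal (T.obj X)}
    (hI : T.IsIdeal I) (hJ : T.IsIdeal J) {S Q V : GSet G}
    (lam : GSetHom Q (S.sum S)) (g : GSetHom Q V) (x y : T.obj S)
    (hx : x ∈ I S) (hy : y ∈ J S) :
    T.nm g (T.res lam (T.tr (GSet.inl S S) x + T.tr (GSet.inr S S) y)) - T.nm g 0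
      ∈ I V ⊔ J V := by
  classical
  apply core T hI hJ (GSet.pbSnd (GSet.inl S S) lam) (GSet.pbSnd (GSet.inr S S) lam) g
  · constructor
    · rintro (ω1 | ω1) (ω2 | ω2) h
      · obtain ⟨⟨s1, q1⟩, h1⟩ := ω1; obtain ⟨⟨s2, q2⟩, h2⟩ := ω2
        have hq : q1 = q2 := h
        subst hq
        have hs : s1 = s2 := Sum.inl.inj (h1.trans h2.symm)
        subst hs
        rfl
      · obtain ⟨⟨s1, q1⟩, h1⟩ := ω1; obtain ⟨⟨s2, q2⟩, h2⟩ := ω2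
        have hq : q1 = q2 := h
        subst hq
        exact absurd (h1.trans h2.symm) Sum.inl_ne_inr
      · obtain ⟨⟨s1, q1⟩, h1⟩ := ω1; obtain ⟨⟨s2, q2⟩, h2⟩ := ω2
        have hq : q1 = q2 := h
        subst hq
        exact absurd (h1.trans h2.symm) Sum.inr_ne_inl
      · obtain ⟨⟨s1, q1⟩, h1⟩ := ω1; obtain ⟨⟨s2, q2⟩, h2⟩ := ω2
        have hq : q1 = q2 := h
        subst hq
        have hs : s1 = s2 := Sum.inr.inj (h1.trans h2.symm)
        subst hs
        rfl
    · intro q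
      rcases hc : lam.toFun q with s | s
      · exact ⟨Sum.inl ⟨(s, q), hc.symm⟩, rfl⟩
      · exact ⟨Sum.inr ⟨(s, q), hc.symm⟩, rfl⟩
  · -- left restriction lies in I
    rw [map_add]
    have t2 : T.res (GSet.pbSnd (GSet.inl S S) lam) (T.res lam (T.tr (GSet.inr S S) y)) = 0 := by
      rw [T.res_comp]
      apply res_tr_empty
      constructor; rintro ⟨⟨s, ω⟩, hP⟩
      exact Sum.inl_ne_inr (ω.property.trans hP.symm)
    rw [map_add, t2, add_zero, T.res_comp, T.tr_bc]
    exact hI.tr_mem _ (hI.res_mem _ hx)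
  · -- right restriction lies in J
    rw [map_add]
    have t1 : T.res (GSet.pbSnd (GSet.inr S S) lam) (T.res lam (T.tr (GSet.inl S S) x)) = 0 := by
      rw [T.res_comp]
      apply res_tr_empty
      constructor; rintro ⟨⟨s, ω⟩, hP⟩
      exact Sum.inr_ne_inl (ω.property.trans hP.symm)
    rw [map_add, t1, zero_add, T.res_comp, T.tr_bc]
    exact hJ.tr_mem _ (hJ.res_mem _ hy)

private theorem shriek_sum_mem (T : TambaraFunctor G) {I J : ∀ X : GSet G, Ideal (T.obj X)}
    (hI : T.IsIdeal I) (hJ : T.IsIdeal J) {S U : GSet G} (f : GSetHom S U)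
    {x y : T.obj S} (hx : x ∈ I S) (hy : y ∈ J S) :
    T.shriek f (x + y) ∈ I U ⊔ J U := by
  classical
  let Fold : GSetHom (S.sum S) S := ⟨Sum.elim _root_.id _root_.id, by rintro gg (s | s) <;> rfl⟩
  have ht : T.tr Fold (T.tr (GSet.inl S S) x + T.tr (GSet.inr S S) y) = x + y := by
    rw [map_add, T.tr_comp, T.tr_comp,
      show Fold.comp (GSet.inl S S) = GSetHom.id S from ghext rfl,
      show Fold.comp (GSet.inr S S) = GSetHom.id S from ghext rfl,
      T.tr_id, T.tr_id]
  have hd1 := T.distrib f Fold (T.tr (GSet.inl S S) x + T.tr (GSet.inr S S) y)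
  rw [ht] at hd1
  have hd0 := T.distrib f Fold 0
  rw [show T.tr Fold (0 : T.obj (S.sum S)) = 0 from map_zero _,
      show T.res (GSet.piEval f Fold) (0 : T.obj (S.sum S)) = 0 from map_zero _] at hd0
  obtain ⟨u, hu, v, hv, hsum⟩ := Submodule.mem_sup.mp
    (norm_res_tr_mem T hI hJ (GSet.piEval f Fold) (GSet.pbSnd f (GSet.piPr f Fold)) x y hx hy)
  show T.nm f (x + y) - T.nm f 0 ∈ _
  rw [hd1, hd0, ← map_sub, ← hsum, map_add]
  exact Submodule.add_mem _
    (Submodule.mem_sup_left (hI.tr_mem _ hu))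
    (Submodule.mem_sup_right (hJ.tr_mem _ hv))

private theorem sup_isIdeal (T : TambaraFunctor G) {I J : ∀ X : GSet G, Ideal (T.obj X)}
    (hI : T.IsIdeal I) (hJ : T.IsIdeal J) : T.IsIdeal (fun X => I X ⊔ J X) := by
  constructor
  · intro X Y f y hy
    obtain ⟨u, hu, v, hv, rfl⟩ := Submodule.mem_sup.mp hy
    rw [map_add]
    exact Submodule.add_mem _
      (Submodule.mem_sup_left (hI.res_mem f hu)) (Submodule.mem_sup_right (hJ.res_mem f hv))
  · intro X Y f x hx
    obtain ⟨u, hu, v, hv, rfl⟩ := Submodule.mem_sup.mp hx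
    rw [map_add]
    exact Submodule.add_mem _
      (Submodule.mem_sup_left (hI.tr_mem f hu)) (Submodule.mem_sup_right (hJ.tr_mem f hv))
  · intro X Y f x hx
    obtain ⟨u, hu, v, hv, rfl⟩ := Submodule.mem_sup.mp hx
    exact shriek_sum_mem T hI hJ f hu hv

private theorem mem_gen_iff (T : TambaraFunctor G) (S : ∀ X : GSet G, Set (T.obj X))
    {X : GSet G} {x : T.obj X} :
    x ∈ T.gen S X ↔
      ∀ I : ∀ Y : GSet G, Ideal (T.obj Y), T.IsIdeal I → (∀ Y, S Y ⊆ ↑(I Y)) → x ∈ I X := by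
  simp [TambaraFunctor.gen, Submodule.mem_iInf]

private theorem gen_isIdeal (T : TambaraFunctor G) (S : ∀ X : GSet G, Set (T.obj X)) :
    T.IsIdeal (T.gen S) := by
  constructor
  · intro X Y f y hy
    rw [mem_gen_iff] at hy ⊢
    intro I hI hS
    exact hI.res_mem f (hy I hI hS)
  · intro X Y f x hx
    rw [mem_gen_iff] at hx ⊢
    intro I hI hS
    exact hI.tr_mem f (hx I hI hS)
  · intro X Y f x hx
    rw [mem_gen_iff] at hx ⊢
    intro I hI hS
    exact hI.shriek_mem f (hx I hI hS)

private theorem self_mem_principal (T : TambaraFunctor G) (A : GSet G) (a : T.obj A) :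
    a ∈ T.principal A a A :=
  (mem_gen_iff T (T.single A a)).mpr fun _ _ hS => hS A ⟨rfl, rfl⟩

end AuxTambara
/-- every maximal ideal of a (nonzero) Tambara functor is prime. -/
theorem isMaximal_isPrime (G : Type) [Group G] [Finite G] (T : TambaraFunctor G)
    (hT : ∃ X : GSet G, Nontrivial (T.obj X))
    (M : ∀ X : GSet G, Ideal (T.obj X)) (hM : T.IsMaximal M) :
    T.IsPrime M := by
  obtain ⟨Z0, hZ0⟩ := hM.ne_top
  refine ⟨hM.isIdeal, hM.ne_top, ?_⟩
  intro X Y _hX _hY a b hab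
  have hKa : T.IsIdeal (fun Z => M Z ⊔ T.principal X a Z) :=
    sup_isIdeal T hM.isIdeal (gen_isIdeal T _)
  have hKb : T.IsIdeal (fun Z => M Z ⊔ T.principal Y b Z) :=
    sup_isIdeal T hM.isIdeal (gen_isIdeal T _)
  rcases hM.eq_of_le _ hKa (fun Z => le_sup_left) with hEa | hTa
  · left
    have hmem : a ∈ M X ⊔ T.principal X a X :=
      Submodule.mem_sup_right (self_mem_principal T X a)
    rwa [show (M X ⊔ T.principal X a X) = M X from congrFun hEa X] at hmem
  rcases hM.eq_of_le _ hKb (fun Z => le_sup_left) with hEb | hTb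
  · right
    have hmem : b ∈ M Y ⊔ T.principal Y b Y :=
      Submodule.mem_sup_right (self_mem_principal T Y b)
    rwa [show (M Y ⊔ T.principal Y b Y) = M Y from congrFun hEb Y] at hmem
  · exfalso
    have h1a : (1 : T.obj Z0) ∈ M Z0 ⊔ T.principal X a Z0 := by
      rw [show M Z0 ⊔ T.principal X a Z0 = ⊤ from hTa Z0]
      exact Submodule.mem_top
    have h1b : (1 : T.obj Z0) ∈ M Z0 ⊔ T.principal Y b Z0 := by
      rw [show M Z0 ⊔ T.principal Y b Z0 = ⊤ from hTb Z0]
      exact Submodule.mem_top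
    obtain ⟨m1, hm1, α, hα, hs1⟩ := Submodule.mem_sup.mp h1a
    obtain ⟨m2, hm2, β, hβ, hs2⟩ := Submodule.mem_sup.mp h1b
    have hmul : α * β ∈ M Z0 := by
      apply hab Z0
      exact Ideal.subset_span ⟨Z0, GSetHom.id Z0, α, β, hα, hβ, (T.tr_id (α * β)).symm⟩
    have hexp : (1 : T.obj Z0) = m1 * m2 + m1 * β + α * m2 + α * β := by
      calc (1 : T.obj Z0) = (m1 + α) * (m2 + β) := by rw [hs1, hs2, one_mul]
        _ = m1 * m2 + m1 * β + α * m2 + α * β := by ring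
    have hone : (1 : T.obj Z0) ∈ M Z0 := by
      rw [hexp]
      exact add_mem (add_mem (add_mem
        (Ideal.mul_mem_right _ _ hm1) (Ideal.mul_mem_right _ _ hm1))
        (Ideal.mul_mem_left _ _ hm2)) hmul
    exact hZ0 ((Ideal.eq_top_iff_one _).mpr hone)
end

section
/- Let T be a Tambara functor on a finite group G and 𝔦 ⊆ T an ideal. Define √𝔦 by (√𝔦)(X) = { a ∈ T(X) : ⟨a⟩ⁿ ⊆ 𝔦 for some n ∈ ℕ }. Then √𝔦 is an ideal of T containing 𝔦, and √𝔦 ⊆ ⋂_{𝔭 prime, 𝔦 ⊆ 𝔭} 𝔭; consequently V(√𝔦) = V(𝔦) in Spec(T). -/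
set_option autoImplicit false

/-- The radical of an ideal of a Tambara functor:
`(√𝔦)(X) = { a | ⟨a⟩ⁿ ⊆ 𝔦 for some n ≥ 1 }`. -/
def TambaraFunctor.radicalSet {G : Type} [Group G] (T : TambaraFunctor G)
    (I : ∀ X : GSet G, Ideal (T.obj X)) (X : GSet G) : Set (T.obj X) :=
  { a | ∃ n : ℕ, 0 < n ∧
      ∀ Y : GSet G, T.mulMulti (List.replicate n (T.principal X a)) Y ≤ I Y }

/-! ### Auxiliary infrastructure -/

theorem GSetHom.ext' {G : Type} [Group G] {X Y : GSet G} {f g : GSetHom X Y}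
    (h : f.toFun = g.toFun) : f = g := by
  cases f; cases g; cases h; rfl

namespace TambaraFunctor

variable {G : Type} [Group G] (T : TambaraFunctor G)

/-- mutually inverse equivariant maps -/
def IsInv {X Y : GSet G} (f : GSetHom X Y) (g : GSetHom Y X) : Prop :=
  GSetHom.comp g f = GSetHom.id X ∧ GSetHom.comp f g = GSetHom.id Y

theorem IsInv.symm' {X Y : GSet G} {f : GSetHom X Y} {g : GSetHom Y X} (h : IsInv f g) :
    IsInv g f := ⟨h.2, h.1⟩

theorem res_res_inv {X Y : GSet G} {f : GSetHom X Y} {g : GSetHom Y X}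
    (h : IsInv f g) (x : T.obj X) : T.res f (T.res g x) = x := by
  rw [T.res_comp, h.1, T.res_id]

theorem tr_tr_inv {X Y : GSet G} {f : GSetHom X Y} {g : GSetHom Y X}
    (h : IsInv f g) (x : T.obj X) : T.tr g (T.tr f x) = x := by
  rw [T.tr_comp, h.1, T.tr_id]

theorem tr_surj {X Y : GSet G} {f : GSetHom X Y} {g : GSetHom Y X} (h : IsInv f g) :
    Function.Surjective (T.tr f) := fun y => ⟨T.tr g y, T.tr_tr_inv h.symm' y⟩

theorem isUnit_tr_one {X Y : GSet G} {f : GSetHom X Y} {g : GSetHom Y X} (h : IsInv f g) :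
    IsUnit (T.tr f (1 : T.obj X)) := by
  obtain ⟨x, hx⟩ := T.tr_surj h (1 : T.obj Y)
  have h1 : T.tr f x = T.tr f 1 * T.res g x := by
    conv_lhs => rw [show x = 1 * T.res f (T.res g x) by rw [T.res_res_inv h, one_mul]]
    exact T.proj_formula f 1 (T.res g x)
  exact IsUnit.of_mul_eq_one _ (by rw [← h1, hx])

theorem obj_subsingleton {X : GSet G} (h : IsEmpty X.carrier) : Subsingleton (T.obj X) := by
  let f : GSetHom X (GSet.empty G) := ⟨fun x => h.elim x, fun g x => h.elim x⟩
  let g' : GSetHom (GSet.empty G) X := ⟨fun x => x.elim, fun g x => x.elim⟩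
  have hinv : IsInv f g' := by
    constructor
    · exact GSetHom.ext' (funext fun x => h.elim x)
    · exact GSetHom.ext' (funext fun x => x.elim)
  constructor
  intro a b
  calc a = T.res f (T.res g' a) := (T.res_res_inv hinv a).symm
    _ = T.res f (T.res g' b) := by rw [T.empty_subsingleton (T.res g' a) (T.res g' b)]
    _ = b := T.res_res_inv hinv b

theorem tr_isEmpty {X Y : GSet G} (f : GSetHom X Y) (h : IsEmpty X.carrier) (x : T.obj X) :
    T.tr f x = 0 := by
  have := T.obj_subsingleton h
  rw [Subsingleton.elim x 0, map_zero]

theorem nm_isEmpty {X Y : GSet G} (f : GSetHom X Y) (h : IsEmpty X.carrier) (x : T.obj X) :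
    T.nm f x = 1 := by
  have := T.obj_subsingleton h
  rw [Subsingleton.elim x 1, map_one]

theorem shriek_isEmpty {X Y : GSet G} (f : GSetHom X Y) (h : IsEmpty X.carrier) (x : T.obj X) :
    T.shriek f x = 0 := by
  rw [TambaraFunctor.shriek, T.nm_isEmpty f h, T.nm_isEmpty f h, sub_self]

theorem complEmpty {X Y : GSet G} (f : GSetHom X Y) (h : Function.Surjective f.toFun) :
    IsEmpty (GSet.compl f).carrier :=
  ⟨fun y => let ⟨x, hx⟩ := h y.val; y.property x hx⟩

theorem nm_zero_surj {X Y : GSet G} (f : GSetHom X Y) (h : Function.Surjective f.toFun) :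
    T.nm f (0 : T.obj X) = 0 := by
  rw [T.nm_zero, T.tr_isEmpty _ (complEmpty f h)]

theorem shriek_surj {X Y : GSet G} (f : GSetHom X Y) (h : Function.Surjective f.toFun)
    (x : T.obj X) : T.shriek f x = T.nm f x := by
  rw [TambaraFunctor.shriek, T.nm_zero_surj f h, sub_zero]

/-- The diagonal into the self-pullback. -/
def pbDiag {U X : GSet G} (f : GSetHom U X) : GSetHom U (GSet.pullback f f) :=
  ⟨fun u => ⟨(u, u), rfl⟩, fun g u => Subtype.ext rfl⟩

theorem pbFst_eq_pbSnd {U X : GSet G} {f : GSetHom U X} (hf : Function.Injective f.toFun) :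
    GSet.pbFst f f = GSet.pbSnd f f :=
  GSetHom.ext' (funext fun q => hf q.property)

theorem isInv_pbFst_diag {U X : GSet G} {f : GSetHom U X} (hf : Function.Injective f.toFun) :
    IsInv (GSet.pbFst f f) (pbDiag f) := by
  constructor
  · apply GSetHom.ext'; funext q
    exact Subtype.ext (Prod.ext rfl (hf q.property))
  · apply GSetHom.ext'; funext u; rfl

theorem pbDiag_injective {U X : GSet G} (f : GSetHom U X) :
    Function.Injective (pbDiag f).toFun := fun a b h => by
  have := congrArg (fun q => (Subtype.val q).1) h
  exact this

theorem res_tr_self {U X : GSet G} {f : GSetHom U X} (hf : Function.Injective f.toFun)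
    (x : T.obj U) : T.res f (T.tr f x) = T.tr (GSet.pbFst f f) 1 * x := by
  rw [T.tr_bc f f x, ← pbFst_eq_pbSnd hf]
  calc T.tr (GSet.pbFst f f) (T.res (GSet.pbFst f f) x)
      = T.tr (GSet.pbFst f f) (1 * T.res (GSet.pbFst f f) x) := by rw [one_mul]
    _ = T.tr (GSet.pbFst f f) 1 * x := T.proj_formula _ 1 x

theorem isUnit_selfUnit {U X : GSet G} {f : GSetHom U X} (hf : Function.Injective f.toFun) :
    IsUnit (T.tr (GSet.pbFst f f) (1 : T.obj (GSet.pullback f f))) :=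
  T.isUnit_tr_one (isInv_pbFst_diag hf)

theorem pullback_isEmpty {U V X : GSet G} (f : GSetHom U X) (g : GSetHom V X)
    (h : ∀ u v, f.toFun u ≠ g.toFun v) : IsEmpty (GSet.pullback f g).carrier :=
  ⟨fun q => h _ _ q.property⟩

theorem res_tr_disjoint {U V X : GSet G} {f : GSetHom U X} {g : GSetHom V X}
    (h : ∀ u v, f.toFun u ≠ g.toFun v) (x : T.obj U) : T.res g (T.tr f x) = 0 := by
  rw [T.tr_bc f g x, T.tr_isEmpty _ (pullback_isEmpty f g h)]

theorem res_nm_disjoint {U V X : GSet G} {f : GSetHom U X} {g : GSetHom V X}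
    (h : ∀ u v, f.toFun u ≠ g.toFun v) (x : T.obj U) : T.res g (T.nm f x) = 1 := by
  rw [T.nm_bc f g x, T.nm_isEmpty _ (pullback_isEmpty f g h)]

theorem res_nm_self {U X : GSet G} {f : GSetHom U X} (hf : Function.Injective f.toFun)
    (x : T.obj U) :
    T.res f (T.nm f x) = T.nm (GSet.pbFst f f) (T.res (GSet.pbFst f f) x) := by
  rw [T.nm_bc f f x, ← pbFst_eq_pbSnd hf]

theorem res_shriek {X Y Z : GSet G} (f : GSetHom X Z) (g : GSetHom Y Z) (x : T.obj X) :
    T.res g (T.shriek f x) =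
      T.shriek (GSet.pbSnd f g) (T.res (GSet.pbFst f g) x) := by
  unfold TambaraFunctor.shriek
  rw [map_sub, T.nm_bc, T.nm_bc, map_zero]

end TambaraFunctor

namespace TambaraFunctor

variable {G : Type} [Group G]

/-- A decomposition of a `G`-set into two disjoint covering sub-`G`-sets. -/
structure Decomp (X : GSet G) where
  L : GSet G
  R : GSet G
  kL : GSetHom L X
  kR : GSetHom R X
  injL : Function.Injective kL.toFun
  injR : Function.Injective kR.toFun
  disj : ∀ l r, kL.toFun l ≠ kR.toFun r
  cover : ∀ x, (∃ l, kL.toFun l = x) ∨ ∃ r, kR.toFun r = x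

/-- Sub-`G`-set cut out by an invariant predicate. -/
def subGSet (X : GSet G) (p : X.carrier → Prop) (hp : ∀ (g : G) x, p x → p (g • x)) :
    GSet G where
  carrier := { x // p x }
  mulAction :=
  { smul := fun g x => ⟨g • x.val, hp g _ x.property⟩
    one_smul := fun x => Subtype.ext (one_smul G x.val)
    mul_smul := fun a b x => Subtype.ext (mul_smul a b x.val) }

def subIncl (X : GSet G) (p : X.carrier → Prop) (hp : ∀ (g : G) x, p x → p (g • x)) :
    GSetHom (subGSet X p hp) X := ⟨Subtype.val, fun _ _ => rfl⟩

theorem not_invariant {X : GSet G} {p : X.carrier → Prop}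
    (hp : ∀ (g : G) x, p x → p (g • x)) : ∀ (g : G) x, ¬ p x → ¬ p (g • x) :=
  fun g x hx hgx => hx (by simpa using hp g⁻¹ _ hgx)

/-- The decomposition of `X` determined by an invariant predicate. -/
def decompOf (X : GSet G) (p : X.carrier → Prop) (hp : ∀ (g : G) x, p x → p (g • x)) :
    Decomp X where
  L := subGSet X p hp
  R := subGSet X (fun x => ¬ p x) (not_invariant hp)
  kL := subIncl X p hp
  kR := subIncl X (fun x => ¬ p x) (not_invariant hp)
  injL := fun a b h => Subtype.ext h
  injR := fun a b h => Subtype.ext h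
  disj := fun l r h => r.property (by rw [show r.val = l.val from h.symm]; exact l.property)
  cover := fun x => by
    by_cases h : p x
    · exact Or.inl ⟨⟨x, h⟩, rfl⟩
    · exact Or.inr ⟨⟨x, h⟩, rfl⟩

namespace Decomp

variable {X : GSet G} (D : Decomp X)

/-- The glueing iso `L ⊔ R ≅ X`. -/
def glue : GSetHom (D.L.sum D.R) X :=
  ⟨Sum.elim D.kL.toFun D.kR.toFun, by
    intro g x
    cases x with
    | inl a => exact D.kL.map_smul g a
    | inr b => exact D.kR.map_smul g b⟩

theorem glue_inl : GSetHom.comp D.glue (GSet.inl D.L D.R) = D.kL := GSetHom.ext' rfl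
theorem glue_inr : GSetHom.comp D.glue (GSet.inr D.L D.R) = D.kR := GSetHom.ext' rfl

open Classical in
noncomputable def split : GSetHom X (D.L.sum D.R) where
  toFun x :=
    if h : ∃ l, D.kL.toFun l = x then Sum.inl h.choose
    else Sum.inr ((D.cover x).resolve_left h).choose
  map_smul g x := by
    by_cases h : ∃ l, D.kL.toFun l = x
    · have h' : ∃ l, D.kL.toFun l = g • x := ⟨g • h.choose, by rw [D.kL.map_smul, h.choose_spec]⟩
      erw [dif_pos h, dif_pos h']
      have : D.kL.toFun h'.choose = D.kL.toFun (g • h.choose) := by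
        rw [h'.choose_spec, D.kL.map_smul, h.choose_spec]
      rw [D.injL this]; rfl
    · have h' : ¬ ∃ l, D.kL.toFun l = g • x := by
        rintro ⟨l, hl⟩
        exact h ⟨g⁻¹ • l, by rw [D.kL.map_smul, hl, inv_smul_smul]⟩
      erw [dif_neg h, dif_neg h']
      have e1 := ((D.cover x).resolve_left h).choose_spec
      have e2 := ((D.cover (g • x)).resolve_left h').choose_spec
      have : D.kR.toFun ((D.cover (g • x)).resolve_left h').choose
          = D.kR.toFun (g • ((D.cover x).resolve_left h).choose) := by
        rw [e2, D.kR.map_smul, e1]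
      rw [D.injR this]; rfl

theorem isInv_glue : IsInv D.glue D.split := by
  constructor
  · apply GSetHom.ext'; funext z
    show D.split.toFun (D.glue.toFun z) = z
    cases z with
    | inl a =>
      have h : ∃ l, D.kL.toFun l = D.glue.toFun (Sum.inl a) := ⟨a, rfl⟩
      rw [show D.split.toFun (D.glue.toFun (Sum.inl a)) = Sum.inl h.choose from dif_pos h]
      congr 1
      exact D.injL h.choose_spec
    | inr b =>
      have h : ¬ ∃ l, D.kL.toFun l = D.glue.toFun (Sum.inr b) := by
        rintro ⟨l, hl⟩; exact D.disj l b hl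
      rw [show D.split.toFun (D.glue.toFun (Sum.inr b)) = Sum.inr ((D.cover _).resolve_left h).choose from dif_neg h]
      congr 1
      exact D.injR ((D.cover _).resolve_left h).choose_spec
  · apply GSetHom.ext'; funext x
    show D.glue.toFun (D.split.toFun x) = x
    by_cases h : ∃ l, D.kL.toFun l = x
    · rw [show D.split.toFun x = Sum.inl h.choose from dif_pos h]
      exact h.choose_spec
    · rw [show D.split.toFun x = Sum.inr ((D.cover x).resolve_left h).choose from dif_neg h]
      exact ((D.cover x).resolve_left h).choose_spec

variable (T : TambaraFunctor G)

theorem res_pair_bij :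
    Function.Bijective (fun x : T.obj X => (T.res D.kL x, T.res D.kR x)) := by
  have key : (fun x : T.obj X => (T.res D.kL x, T.res D.kR x)) =
      (fun t : T.obj (D.L.sum D.R) =>
        (T.res (GSet.inl D.L D.R) t, T.res (GSet.inr D.L D.R) t)) ∘ (T.res D.glue) := by
    funext x
    simp only [Function.comp_apply, T.res_comp, D.glue_inl, D.glue_inr]
  rw [key]
  have hres : Function.Bijective (T.res D.glue : T.obj X → T.obj (D.L.sum D.R)) := by
    constructor
    · intro a b h
      have := congrArg (T.res D.split) h
      rwa [T.res_res_inv D.isInv_glue.symm', T.res_res_inv D.isInv_glue.symm'] at this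
    · intro t
      exact ⟨T.res D.split t, T.res_res_inv D.isInv_glue t⟩
  exact (T.add_bij D.L D.R).comp hres

theorem eq_of_res {x y : T.obj X} (h1 : T.res D.kL x = T.res D.kL y)
    (h2 : T.res D.kR x = T.res D.kR y) : x = y :=
  (D.res_pair_bij T).injective (by rw [Prod.mk.injEq]; exact ⟨h1, h2⟩)

theorem res_kR_tr_kL (a : T.obj D.L) : T.res D.kR (T.tr D.kL a) = 0 :=
  T.res_tr_disjoint D.disj a

theorem res_kL_tr_kR (b : T.obj D.R) : T.res D.kL (T.tr D.kR b) = 0 :=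
  T.res_tr_disjoint (fun r l h => D.disj l r h.symm) b

/-- Every element decomposes as a sum of transfers from the two parts, with parts
in the span of the corresponding restriction. -/
theorem decompose (x : T.obj X) :
    ∃ (a : T.obj D.L) (b : T.obj D.R),
      x = T.tr D.kL a + T.tr D.kR b ∧
      a ∈ Ideal.span {T.res D.kL x} ∧ b ∈ Ideal.span {T.res D.kR x} := by
  obtain ⟨vL, hvL⟩ := (T.isUnit_selfUnit D.injL).exists_right_inv
  obtain ⟨vR, hvR⟩ := (T.isUnit_selfUnit D.injR).exists_right_inv
  set uL := T.tr (GSet.pbFst D.kL D.kL) (1 : T.obj (GSet.pullback D.kL D.kL)) with huL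
  set uR := T.tr (GSet.pbFst D.kR D.kR) (1 : T.obj (GSet.pullback D.kR D.kR)) with huR
  refine ⟨vL * T.res D.kL x, vR * T.res D.kR x, ?_, ?_, ?_⟩
  · apply D.eq_of_res T
    · rw [map_add, T.res_tr_self D.injL, D.res_kL_tr_kR T, add_zero, ← huL,
        ← mul_assoc, hvL, one_mul]
    · rw [map_add, T.res_tr_self D.injR, D.res_kR_tr_kL T, zero_add, ← huR,
        ← mul_assoc, hvR, one_mul]
  · exact Ideal.mul_mem_left _ _ (Ideal.subset_span rfl)
  · exact Ideal.mul_mem_left _ _ (Ideal.subset_span rfl)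

end Decomp

end TambaraFunctor

namespace TambaraFunctor

variable {G : Type} [Group G] (T : TambaraFunctor G)

theorem top_isIdeal : T.IsIdeal (fun _ => ⊤) :=
  ⟨fun _ _ _ => Submodule.mem_top, fun _ _ _ => Submodule.mem_top, fun _ _ _ => Submodule.mem_top⟩

theorem mem_gen_iff {S : ∀ X : GSet G, Set (T.obj X)} {X : GSet G} {x : T.obj X} :
    x ∈ T.gen S X ↔ ∀ J : ∀ Y : GSet G, Ideal (T.obj Y),
      T.IsIdeal J → (∀ Y, S Y ⊆ ↑(J Y)) → x ∈ J X := by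
  simp only [TambaraFunctor.gen, Submodule.mem_iInf]

theorem gen_isIdeal (S : ∀ X : GSet G, Set (T.obj X)) : T.IsIdeal (T.gen S) := by
  constructor
  · intro X Y f y hy
    rw [T.mem_gen_iff] at hy ⊢
    intro J hJ hS
    exact hJ.res_mem f (hy J hJ hS)
  · intro X Y f x hx
    rw [T.mem_gen_iff] at hx ⊢
    intro J hJ hS
    exact hJ.tr_mem f (hx J hJ hS)
  · intro X Y f x hx
    rw [T.mem_gen_iff] at hx ⊢
    intro J hJ hS
    exact hJ.shriek_mem f (hx J hJ hS)

theorem gen_le {S : ∀ X : GSet G, Set (T.obj X)} {J : ∀ X : GSet G, Ideal (T.obj X)}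
    (hJ : T.IsIdeal J) (hS : ∀ Y, S Y ⊆ ↑(J Y)) (X : GSet G) : T.gen S X ≤ J X :=
  fun _ hx => T.mem_gen_iff.1 hx J hJ hS

theorem subset_gen (S : ∀ X : GSet G, Set (T.obj X)) (X : GSet G) :
    S X ⊆ ↑(T.gen S X) := fun x hx => T.mem_gen_iff.2 fun _ _ hS => hS X hx

theorem principal_isIdeal {A : GSet G} (a : T.obj A) : T.IsIdeal (T.principal A a) :=
  T.gen_isIdeal _

theorem mem_principal_self {A : GSet G} (a : T.obj A) : a ∈ T.principal A a A :=
  T.subset_gen _ A ⟨rfl, rfl⟩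

theorem principal_le {A : GSet G} {a : T.obj A} {J : ∀ X : GSet G, Ideal (T.obj X)}
    (hJ : T.IsIdeal J) (ha : a ∈ J A) (X : GSet G) : T.principal A a X ≤ J X := by
  apply T.gen_le hJ
  intro Y x hx
  obtain ⟨h, hh⟩ := hx
  subst h; subst hh
  exact ha

/-! ### products of ideals -/

/-- Restriction-closedness of a family of ideals. -/
def ResC (I : ∀ X : GSet G, Ideal (T.obj X)) : Prop :=
  ∀ {X Y : GSet G} (f : GSetHom X Y) {y : T.obj Y}, y ∈ I Y → T.res f y ∈ I X

theorem resC_of_isIdeal {I : ∀ X : GSet G, Ideal (T.obj X)} (h : T.IsIdeal I) :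
    T.ResC I := by intro X Y f y hy; exact h.res_mem f hy

theorem resC_top : T.ResC (fun _ => ⊤) := by intro X Y f y _; exact Submodule.mem_top


theorem mem_mulSet_of_mul {I J : ∀ X : GSet G, Ideal (T.obj X)} {Z : GSet G}
    {c d : T.obj Z} (hc : c ∈ I Z) (hd : d ∈ J Z) : c * d ∈ T.mulSet I J Z :=
  ⟨Z, GSetHom.id Z, c, d, hc, hd, (T.tr_id _).symm⟩

theorem mulSet_smul {I J : ∀ X : GSet G, Ideal (T.obj X)} {X : GSet G}
    (c : T.obj X) {w : T.obj X} (hw : w ∈ T.mulSet I J X) : c * w ∈ T.mulSet I J X := by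
  obtain ⟨A, p, a, b, ha, hb, rfl⟩ := hw
  refine ⟨A, p, T.res p c * a, b, Ideal.mul_mem_left _ _ ha, hb, ?_⟩
  have : T.res p c * a * b = a * b * T.res p c := by ring
  rw [this, T.proj_formula, mul_comm]

theorem mulSet_res {I J : ∀ X : GSet G, Ideal (T.obj X)} (hI : T.ResC I)
    (hJ : T.ResC J) {X Y : GSet G} (f : GSetHom X Y) {w : T.obj Y}
    (hw : w ∈ T.mulSet I J Y) : T.res f w ∈ T.mulSet I J X := by
  obtain ⟨A, p, a, b, ha, hb, rfl⟩ := hw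
  rw [T.tr_bc p f]
  exact ⟨_, GSet.pbSnd p f, T.res (GSet.pbFst p f) a, T.res (GSet.pbFst p f) b,
    hI _ ha, hJ _ hb, by rw [map_mul]⟩

theorem mulSet_tr {I J : ∀ X : GSet G, Ideal (T.obj X)} {X Y : GSet G}
    (f : GSetHom X Y) {w : T.obj X} (hw : w ∈ T.mulSet I J X) :
    T.tr f w ∈ T.mulSet I J Y := by
  obtain ⟨A, p, a, b, ha, hb, rfl⟩ := hw
  rw [T.tr_comp]
  exact ⟨A, f.comp p, a, b, ha, hb, rfl⟩

theorem mem_mulIdl_iff {I J : ∀ X : GSet G, Ideal (T.obj X)} {X : GSet G} {z : T.obj X} :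
    z ∈ T.mulIdl I J X ↔
      ∃ l : List (T.obj X), (∀ w ∈ l, w ∈ T.mulSet I J X) ∧ l.sum = z := by
  constructor
  · intro hz
    refine Submodule.span_induction ?_ ?_ ?_ ?_ hz
    · intro w hw
      exact ⟨[w], by simpa using hw, by simp⟩
    · exact ⟨[], by simp, rfl⟩
    · rintro a b - - ⟨l₁, h₁, rfl⟩ ⟨l₂, h₂, rfl⟩
      exact ⟨l₁ ++ l₂, by
        intro w hw
        rcases List.mem_append.1 hw with h | h
        exacts [h₁ w h, h₂ w h], by simp⟩
    · rintro c a - ⟨l, hl, rfl⟩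
      refine ⟨l.map (fun w => c * w), ?_, ?_⟩
      · intro w hw
        obtain ⟨v, hv, rfl⟩ := List.mem_map.1 hw
        exact T.mulSet_smul c (hl v hv)
      · rw [smul_eq_mul]
        clear hl
        induction l with
        | nil => simp
        | cons a t ih => simp [mul_add, ih]
  · rintro ⟨l, hl, rfl⟩
    exact list_sum_mem fun w hw => Ideal.subset_span (hl w hw)

end TambaraFunctor

namespace TambaraFunctor

variable {G : Type} [Group G] (T : TambaraFunctor G)

theorem mulIdl_res {I J : ∀ X : GSet G, Ideal (T.obj X)} (hI : T.ResC I)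
    (hJ : T.ResC J) {X Y : GSet G} (f : GSetHom X Y) {z : T.obj Y}
    (hz : z ∈ T.mulIdl I J Y) : T.res f z ∈ T.mulIdl I J X := by
  rw [T.mem_mulIdl_iff] at hz ⊢
  obtain ⟨l, hl, rfl⟩ := hz
  refine ⟨l.map (T.res f), ?_, ?_⟩
  · intro w hw
    obtain ⟨v, hv, rfl⟩ := List.mem_map.1 hw
    exact T.mulSet_res hI hJ f (hl v hv)
  · rw [← map_list_sum]

theorem mulIdl_tr {I J : ∀ X : GSet G, Ideal (T.obj X)} {X Y : GSet G}
    (f : GSetHom X Y) {z : T.obj X} (hz : z ∈ T.mulIdl I J X) :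
    T.tr f z ∈ T.mulIdl I J Y := by
  rw [T.mem_mulIdl_iff] at hz ⊢
  obtain ⟨l, hl, rfl⟩ := hz
  refine ⟨l.map (T.tr f), ?_, ?_⟩
  · intro w hw
    obtain ⟨v, hv, rfl⟩ := List.mem_map.1 hw
    exact T.mulSet_tr f (hl v hv)
  · rw [← map_list_sum]

theorem mulIdl_le_left {I J K : ∀ X : GSet G, Ideal (T.obj X)} (hK : T.IsIdeal K)
    (hIK : ∀ Z, I Z ≤ K Z) (X : GSet G) : T.mulIdl I J X ≤ K X := by
  rw [TambaraFunctor.mulIdl, Ideal.span_le]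
  rintro z ⟨A, p, a, b, ha, hb, rfl⟩
  exact hK.tr_mem p (Ideal.mul_mem_right b _ (hIK A ha))

theorem mulIdl_le_right {I J K : ∀ X : GSet G, Ideal (T.obj X)} (hK : T.IsIdeal K)
    (hJK : ∀ Z, J Z ≤ K Z) (X : GSet G) : T.mulIdl I J X ≤ K X := by
  rw [TambaraFunctor.mulIdl, Ideal.span_le]
  rintro z ⟨A, p, a, b, ha, hb, rfl⟩
  exact hK.tr_mem p (Ideal.mul_mem_left _ _ (hJK A hb))

theorem mulIdl_mono {I I' J J' : ∀ X : GSet G, Ideal (T.obj X)}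
    (hII' : ∀ Z, I Z ≤ I' Z) (hJJ' : ∀ Z, J Z ≤ J' Z) (X : GSet G) :
    T.mulIdl I J X ≤ T.mulIdl I' J' X := by
  apply Ideal.span_mono
  rintro z ⟨A, p, a, b, ha, hb, rfl⟩
  exact ⟨A, p, a, b, hII' A ha, hJJ' A hb, rfl⟩

theorem mulIdl_comm (I J : ∀ X : GSet G, Ideal (T.obj X)) :
    T.mulIdl I J = T.mulIdl J I := by
  funext X
  have : ∀ (I' J' : ∀ X : GSet G, Ideal (T.obj X)),
      T.mulSet I' J' X ⊆ T.mulSet J' I' X := by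
    rintro I' J' z ⟨A, p, a, b, ha, hb, rfl⟩
    exact ⟨A, p, b, a, hb, ha, by rw [mul_comm]⟩
  exact le_antisymm (Ideal.span_mono (this I J)) (Ideal.span_mono (this J I))

theorem tr_mul_sum_list {X Y : GSet G} (p : GSetHom Y X) (a : T.obj Y)
    (l : List (T.obj Y)) :
    T.tr p (a * l.sum) = (l.map (fun w => T.tr p (a * w))).sum := by
  induction l with
  | nil => simp
  | cons w t ih => rw [List.sum_cons, mul_add, map_add, ih, List.map_cons, List.sum_cons]

theorem mulIdl_assoc {I J K : ∀ X : GSet G, Ideal (T.obj X)} (hI : T.ResC I)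
    (hK : T.ResC K) :
    T.mulIdl I (T.mulIdl J K) = T.mulIdl (T.mulIdl I J) K := by
  funext X
  apply le_antisymm
  · rw [TambaraFunctor.mulIdl, Ideal.span_le]
    rintro z ⟨A, p, a, m, ha, hm, rfl⟩
    rw [T.mem_mulIdl_iff] at hm
    obtain ⟨l, hl, rfl⟩ := hm
    rw [T.tr_mul_sum_list]
    apply list_sum_mem
    intro u hu
    obtain ⟨w, hw, rfl⟩ := List.mem_map.1 hu
    obtain ⟨B, q, b, c, hb, hc, rfl⟩ := hl w hw
    have e1 : a * T.tr q (b * c) = T.tr q ((T.res q a * b) * c) := by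
      have : T.res q a * b * c = b * c * T.res q a := by ring
      rw [this, T.proj_formula, mul_comm]
    rw [e1, T.tr_comp]
    exact Ideal.subset_span ⟨B, p.comp q, T.res q a * b, c,
      Ideal.subset_span (T.mem_mulSet_of_mul (hI q ha) hb), hc, rfl⟩
  · rw [TambaraFunctor.mulIdl, Ideal.span_le]
    rintro z ⟨A, p, m, c, hm, hc, rfl⟩
    rw [T.mem_mulIdl_iff] at hm
    obtain ⟨l, hl, rfl⟩ := hm
    have e0 : l.sum * c = c * l.sum := mul_comm _ _
    rw [e0, T.tr_mul_sum_list]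
    apply list_sum_mem
    intro u hu
    obtain ⟨w, hw, rfl⟩ := List.mem_map.1 hu
    obtain ⟨B, q, a, b, ha, hb, rfl⟩ := hl w hw
    have e1 : c * T.tr q (a * b) = T.tr q (a * (b * T.res q c)) := by
      have : a * (b * T.res q c) = a * b * T.res q c := by ring
      rw [this, T.proj_formula, mul_comm]
    rw [e1, T.tr_comp]
    exact Ideal.subset_span ⟨B, p.comp q, a, b * T.res q c, ha,
      Ideal.subset_span (T.mem_mulSet_of_mul hb (hK q hc)), rfl⟩

theorem mulMulti_mono : ∀ {l₁ l₂ : List (∀ X : GSet G, Ideal (T.obj X))},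
    List.Forall₂ (fun A B => ∀ X, A X ≤ B X) l₁ l₂ →
    ∀ X, T.mulMulti l₁ X ≤ T.mulMulti l₂ X := by
  intro l₁ l₂ h
  induction h with
  | nil => exact fun X => le_rfl
  | cons hAB _ ih => exact fun X => T.mulIdl_mono (fun Z => hAB Z) ih X

theorem mulIdl_resC {I J : ∀ X : GSet G, Ideal (T.obj X)} (hI : T.ResC I)
    (hJ : T.ResC J) : T.ResC (T.mulIdl I J) := by
  intro X Y f z hz; exact T.mulIdl_res hI hJ f hz

theorem mulMulti_resC (l : List (∀ X : GSet G, Ideal (T.obj X)))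
    (hl : ∀ A ∈ l, T.ResC A) : T.ResC (T.mulMulti l) := by
  induction l with
  | nil => exact T.resC_top
  | cons A t ih =>
    exact T.mulIdl_resC (hl A (by simp)) (ih (fun B hB => hl B (by simp [hB])))

theorem mulMulti_perm {l₁ l₂ : List (∀ X : GSet G, Ideal (T.obj X))} (h : l₁.Perm l₂) :
    (∀ A ∈ l₁, T.ResC A) → T.mulMulti l₁ = T.mulMulti l₂ := by
  induction h with
  | nil => exact fun _ => rfl
  | @cons A t₁ t₂ h ih =>
    intro hl
    show T.mulIdl A (T.mulMulti t₁) = T.mulIdl A (T.mulMulti t₂)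
    rw [ih (fun B hB => hl B (List.mem_cons_of_mem A hB))]
  | @swap A B l =>
    intro hl
    have hA : T.ResC A := hl A (by simp)
    have hB : T.ResC B := hl B (by simp)
    have hM : T.ResC (T.mulMulti l) := T.mulMulti_resC l (fun C hC => hl C (by simp [hC]))
    show T.mulIdl B (T.mulIdl A (T.mulMulti l)) = T.mulIdl A (T.mulIdl B (T.mulMulti l))
    rw [T.mulIdl_assoc hB hM, T.mulIdl_assoc hA hM, T.mulIdl_comm B A]
  | trans h1 h2 ih1 ih2 =>
    intro hl
    rw [ih1 hl, ih2 (fun B hB => hl B (h1.symm.subset hB))]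

theorem mulMulti_append_le (l₁ l₂ : List (∀ X : GSet G, Ideal (T.obj X))) (X : GSet G) :
    T.mulMulti (l₁ ++ l₂) X ≤ T.mulMulti l₁ X := by
  induction l₁ generalizing X with
  | nil => exact le_top
  | cons A t ih =>
    exact T.mulIdl_mono (fun _ => le_rfl) (fun Z => ih Z) X

end TambaraFunctor

namespace TambaraFunctor

variable {G : Type} [Group G]

theorem surj_of_isInv {X Y : GSet G} {f : GSetHom X Y} {g : GSetHom Y X}
    (h : IsInv f g) : Function.Surjective f.toFun := by
  intro y
  refine ⟨g.toFun y, ?_⟩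
  have := congrArg (fun k => GSetHom.toFun k y) h.2
  exact this

/-- The fold map `X ⊔ X → X`. -/
def sumFold (X : GSet G) : GSetHom (GSet.sum X X) X :=
  ⟨Sum.elim id id, by intro g z; cases z <;> rfl⟩

theorem sumFold_inl (X : GSet G) :
    GSetHom.comp (sumFold X) (GSet.inl X X) = GSetHom.id X := GSetHom.ext' rfl

theorem sumFold_inr (X : GSet G) :
    GSetHom.comp (sumFold X) (GSet.inr X X) = GSetHom.id X := GSetHom.ext' rfl

/-- "All points of the fiber are assigned to the left copy". -/
def allLeft {X Y : GSet G} (f : GSetHom X Y) :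
    (GSet.piObj f (sumFold X)).carrier → Prop :=
  fun s => ∀ (x' : X.carrier) (c : X.carrier), s.val.2 x' ≠ some (Sum.inr c)

theorem allLeft_invariant {X Y : GSet G} (f : GSetHom X Y) :
    ∀ (g : G) s, allLeft f s → allLeft f (g • s) := by
  intro g s hs x' c hc
  have he : ((g • s : (GSet.piObj f (sumFold X)).carrier)).val.2 x'
      = (s.val.2 (g⁻¹ • x')).map (g • ·) := rfl
  rw [he] at hc
  obtain ⟨b, hb, hgb⟩ := Option.map_eq_some_iff.1 hc
  cases b with
  | inl a => exact Sum.inl_ne_inr (show Sum.inl (g • a) = Sum.inr c from hgb)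
  | inr a => exact hs _ a hb

end TambaraFunctor

namespace TambaraFunctor

variable {G : Type} [Group G] (T : TambaraFunctor G)

theorem recip {X Y : GSet G} (f : GSetHom X Y) (x y : T.obj X)
    (M : ∀ Z : GSet G, Ideal (T.obj Z))
    (hMtr : ∀ {Z V : GSet G} (g : GSetHom Z V) {z : T.obj Z}, z ∈ M Z → T.tr g z ∈ M V)
    (hx : ∀ {Z₁ Z₂ V : GSet G} (r : GSetHom Z₁ X) (s : GSetHom Z₁ Z₂) (q : GSetHom Z₂ V),
      T.shriek q (T.tr s (T.res r x)) ∈ M V)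
    (hy : ∀ {Z₁ Z₂ V : GSet G} (r : GSetHom Z₁ X) (s : GSetHom Z₁ Z₂) (q : GSetHom Z₂ V),
      T.shriek q (T.tr s (T.res r y)) ∈ M V) :
    T.shriek f (x + y) ∈ M Y := by
  classical
  set nab := sumFold X with hnab
  set w : T.obj (GSet.sum X X) := T.tr (GSet.inl X X) x + T.tr (GSet.inr X X) y with hw
  have hxy : T.tr nab w = x + y := by
    rw [hw, map_add, T.tr_comp, T.tr_comp, sumFold_inl, sumFold_inr, T.tr_id, T.tr_id]
  set π := GSet.piPr f nab with hπ
  set lam := GSet.piEval f nab with hlam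
  set q := GSet.pbSnd f π with hq
  set d := T.res lam w with hd
  have key : T.shriek f (x + y) = T.tr π (T.shriek q d) := by
    rw [← hxy]
    unfold TambaraFunctor.shriek
    have h0 : T.nm f (T.tr nab 0) = T.tr π (T.nm q (T.res lam 0)) := T.distrib f nab 0
    rw [map_zero (T.tr nab), map_zero (T.res lam)] at h0
    rw [T.distrib f nab w, h0, ← map_sub (T.tr π)]
  set D := decompOf (GSet.piObj f nab) (allLeft f) (allLeft_invariant f) with hD
  obtain ⟨a₀, a₁, ht, ha₀, ha₁⟩ := D.decompose T (T.shriek q d)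
  -- Left piece
  have hL : T.res D.kL (T.shriek q d) ∈ M D.L := by
    rw [T.res_shriek q D.kL d]
    set μ := GSetHom.comp lam (GSet.pbFst q D.kL) with hμ
    have hdis : ∀ (u : X.carrier) v, (GSet.inr X X).toFun u ≠ μ.toFun v := by
      intro u v h
      have hs : allLeft f ((GSet.pbFst q D.kL).toFun v).val.2 := by
        have hqv : ((GSet.pbFst q D.kL).toFun v).val.2
            = ((GSet.pbSnd q D.kL).toFun v).val := v.property
        rw [hqv]
        exact ((GSet.pbSnd q D.kL).toFun v).property
      have hsome : some (Sum.inr u)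
          = (((GSet.pbFst q D.kL).toFun v).val.2).val.2
              (((GSet.pbFst q D.kL).toFun v).val.1) :=
        (congrArg some h).trans (Option.some_get _)
      exact hs _ u hsome.symm
    have e0 : T.res (GSet.pbFst q D.kL) d = T.res μ w := by
      rw [hd, T.res_comp (GSet.pbFst q D.kL) lam, ← hμ]
    have hδd : T.res (GSet.pbFst q D.kL) d
        = T.tr (GSet.pbSnd (GSet.inl X X) μ) (T.res (GSet.pbFst (GSet.inl X X) μ) x) := by
      rw [e0, hw, map_add, T.res_tr_disjoint hdis y, add_zero, T.tr_bc]
    rw [hδd]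
    exact hx _ _ _
  -- Right piece
  have hR : T.res D.kR (T.shriek q d) ∈ M D.R := by
    rw [T.res_shriek q D.kR d]
    set q₁ := GSet.pbSnd q D.kR with hq₁
    set c₁ := GSet.pbFst q D.kR with hc₁
    set ν := GSetHom.comp lam c₁ with hν
    -- the sub-decomposition of the pullback by the side of the evaluation
    have hφinv : ∀ (g : G) p, (∃ cc, ν.toFun p = Sum.inl cc) →
        ∃ cc, ν.toFun (g • p) = Sum.inl cc := by
      intro g p ⟨cc, hcc⟩
      exact ⟨g • cc, by rw [ν.map_smul, hcc]; rfl⟩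
    set D2 := decompOf (GSet.pullback q D.kR) (fun p => ∃ cc, ν.toFun p = Sum.inl cc)
      hφinv with hD2
    set e := T.res c₁ d with he
    -- e over the right part is a transfer of a restriction of y
    have hdisR : ∀ (u : X.carrier) v,
        (GSet.inl X X).toFun u ≠ (GSetHom.comp ν D2.kR).toFun v := by
      intro u v h
      rcases hval : ν.toFun (D2.kR.toFun v) with c | c
      · exact v.property ⟨c, hval⟩
      · rw [show (GSetHom.comp ν D2.kR).toFun v = ν.toFun (D2.kR.toFun v) from rfl,
          hval] at h
        exact Sum.inl_ne_inr h
    have e1 : T.res D2.kR e = T.res (GSetHom.comp ν D2.kR) w := by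
      rw [he, hd, T.res_comp c₁ lam, ← hν, T.res_comp D2.kR ν]
    set eL := T.res D2.kL e with heL
    set eRv := T.res D2.kR e with heRv
    have heR : eRv
        = T.tr (GSet.pbSnd (GSet.inr X X) (GSetHom.comp ν D2.kR))
            (T.res (GSet.pbFst (GSet.inr X X) (GSetHom.comp ν D2.kR)) y) := by
      rw [e1, hw, map_add, T.res_tr_disjoint hdisR x, zero_add, T.tr_bc]
    -- surjectivity of the right leg over the right part
    have hsurj2 : Function.Surjective (GSetHom.comp q₁ D2.kR).toFun := by
      intro s₀
      have hns : ¬ allLeft f s₀.val := s₀.property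
      simp only [allLeft] at hns
      push_neg at hns
      obtain ⟨x', c, hc⟩ := hns
      have hfx : f.toFun x' = (s₀.val).val.1 :=
        (s₀.val.property.1 x').1 (by rw [hc]; rfl)
      have hqz : q.toFun (⟨(x', s₀.val), hfx⟩ : (GSet.pullback f π).carrier)
          = D.kR.toFun s₀ := rfl
      refine ⟨⟨⟨((⟨(x', s₀.val), hfx⟩ : (GSet.pullback f π).carrier), s₀), hqz⟩, ?_⟩, ?_⟩
      · rintro ⟨cc, hcc⟩
        have hνp : ν.toFun (⟨((⟨(x', s₀.val), hfx⟩ : (GSet.pullback f π).carrier), s₀),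
            hqz⟩ : (GSet.pullback q D.kR).carrier) = Sum.inr c := GSet.optGet hc _
        rw [hνp] at hcc
        exact Sum.inr_ne_inl hcc
      · rfl
    have hq₁surj : Function.Surjective q₁.toFun := by
      intro s₀
      obtain ⟨pp, hpp⟩ := hsurj2 s₀
      exact ⟨D2.kR.toFun pp, hpp⟩
    -- splitting e as a product
    obtain ⟨vL2, hvL2⟩ := (T.isUnit_selfUnit D2.injL).exists_right_inv
    obtain ⟨vR2, hvR2⟩ := (T.isUnit_selfUnit D2.injR).exists_right_inv
    set h₁ := T.tr D2.kL (vL2 * eL) + T.tr D2.kR vR2 with hh₁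
    set h₂ := T.tr D2.kL vL2 + T.tr D2.kR (vR2 * eRv) with hh₂
    have hresL1 : T.res D2.kL h₁ = eL := by
      rw [hh₁, map_add, T.res_tr_self D2.injL, D2.res_kL_tr_kR T, add_zero,
        ← mul_assoc, hvL2, one_mul]
    have hresR1 : T.res D2.kR h₁ = 1 := by
      rw [hh₁, map_add, D2.res_kR_tr_kL T, T.res_tr_self D2.injR, zero_add, hvR2]
    have hresL2 : T.res D2.kL h₂ = 1 := by
      rw [hh₂, map_add, T.res_tr_self D2.injL, D2.res_kL_tr_kR T, add_zero, hvL2]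
    have hresR2 : T.res D2.kR h₂ = eRv := by
      rw [hh₂, map_add, D2.res_kR_tr_kL T, T.res_tr_self D2.injR, zero_add,
        ← mul_assoc, hvR2, one_mul]
    have hprod : e = h₁ * h₂ := by
      apply D2.eq_of_res T
      · rw [map_mul, hresL1, hresL2, mul_one, heL]
      · rw [map_mul, hresR1, hresR2, one_mul, heRv]
    -- h₂ is a norm from the right part
    set δ := pbDiag D2.kR with hδ
    set ρ := GSet.pbFst D2.kR D2.kR with hρ
    have hinvρ : IsInv ρ δ := isInv_pbFst_diag D2.injR
    set β := T.res δ (T.nm δ eRv) with hβ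
    have hh₂n : h₂ = T.nm D2.kR β := by
      apply D2.eq_of_res T
      · rw [hresL2, T.res_nm_disjoint (fun r l hrl => D2.disj l r hrl.symm)]
      · rw [hresR2, T.res_nm_self D2.injR, ← hρ, hβ, T.res_comp ρ δ, hinvρ.1,
          T.res_id, T.nm_comp δ ρ, hinvρ.2, T.nm_id]
    set σ := GSet.pbFst δ δ with hσ
    have hinvσ : IsInv σ (pbDiag δ) := isInv_pbFst_diag (pbDiag_injective D2.kR)
    have hβσ : β = T.nm σ (T.res σ eRv) := by
      rw [hβ, T.res_nm_self (pbDiag_injective D2.kR), ← hσ]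
    have hcompsurj : Function.Surjective ((GSetHom.comp q₁ D2.kR).comp σ).toFun := by
      intro s₀
      obtain ⟨pp, hpp⟩ := hsurj2 s₀
      obtain ⟨zz, hzz⟩ := surj_of_isInv hinvσ pp
      exact ⟨zz, by
        rw [show ((GSetHom.comp q₁ D2.kR).comp σ).toFun zz
          = (GSetHom.comp q₁ D2.kR).toFun (σ.toFun zz) from rfl, hzz, hpp]⟩
    have hfin : T.nm q₁ h₂ ∈ M D.R := by
      have e2 : T.nm q₁ h₂ = T.shriek ((GSetHom.comp q₁ D2.kR).comp σ)
          (T.tr (GSet.pbSnd (GSet.pbSnd (GSet.inr X X) (GSetHom.comp ν D2.kR)) σ)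
            (T.res (GSetHom.comp (GSet.pbFst (GSet.inr X X) (GSetHom.comp ν D2.kR))
              (GSet.pbFst (GSet.pbSnd (GSet.inr X X) (GSetHom.comp ν D2.kR)) σ)) y)) := by
        rw [T.shriek_surj _ hcompsurj]
        rw [hh₂n, T.nm_comp D2.kR q₁, hβσ, T.nm_comp σ (GSetHom.comp q₁ D2.kR), heR,
          T.tr_bc, T.res_comp]
      rw [e2]
      exact hy _ _ _
    have hnorm : T.shriek q₁ e = T.nm q₁ h₁ * T.nm q₁ h₂ := by
      rw [T.shriek_surj q₁ hq₁surj, hprod, map_mul]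
    rw [hnorm]
    exact Ideal.mul_mem_left _ _ hfin
  -- assemble
  rw [key, ht, map_add, T.tr_comp, T.tr_comp]
  have hm₀ : a₀ ∈ M D.L :=
    Ideal.span_le.mpr (Set.singleton_subset_iff.mpr hL) ha₀
  have hm₁ : a₁ ∈ M D.R :=
    Ideal.span_le.mpr (Set.singleton_subset_iff.mpr hR) ha₁
  exact add_mem (hMtr _ hm₀) (hMtr _ hm₁)

end TambaraFunctor

namespace TambaraFunctor

variable {G : Type} [Group G] (T : TambaraFunctor G)

/-- Shriek of a single generator of the product ideal lands in the product ideal. -/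
theorem shriek_mulSet {I J : ∀ X : GSet G, Ideal (T.obj X)} (hI : T.IsIdeal I)
    (hJ : T.IsIdeal J) {X Y : GSet G} (g : GSetHom X Y) {z : T.obj X}
    (hz : z ∈ T.mulSet I J X) : T.shriek g z ∈ T.mulIdl I J Y := by
  classical
  obtain ⟨A, p, a, b, ha, hb, rfl⟩ := hz
  set π := GSet.piPr g p with hπ
  set lam := GSet.piEval g p with hlam
  set q := GSet.pbSnd g π with hq
  have key : T.shriek g (T.tr p (a * b)) =
      T.tr π (T.shriek q (T.res lam a * T.res lam b)) := by
    unfold TambaraFunctor.shriek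
    have h0 : T.nm g (T.tr p 0) = T.tr π (T.nm q (T.res lam 0)) := T.distrib g p 0
    rw [map_zero (T.tr p), map_zero (T.res lam)] at h0
    rw [T.distrib g p (a * b), h0, ← map_sub (T.tr π), map_mul]
  rw [key]
  apply T.mulIdl_tr
  -- decompose the exponential object into the image of q and its complement
  have hinv : ∀ (gg : G) s, (∃ zz, q.toFun zz = s) → ∃ zz, q.toFun zz = gg • s := by
    rintro gg s ⟨zz, rfl⟩
    exact ⟨gg • zz, q.map_smul gg zz⟩
  set D := decompOf (GSet.piObj g p) (fun s => ∃ zz, q.toFun zz = s) hinv with hD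
  set α := T.res lam a with hα
  set β := T.res lam b with hβ
  have hαI : α ∈ I _ := hI.res_mem lam ha
  have hβJ : β ∈ J _ := hJ.res_mem lam hb
  -- left (image) component
  have hL : T.res D.kL (T.shriek q (α * β)) ∈ T.mulIdl I J D.L := by
    rw [T.res_shriek q D.kL]
    set qL := GSet.pbSnd q D.kL with hqL
    set cL := GSet.pbFst q D.kL with hcL
    have hqLsurj : Function.Surjective qL.toFun := by
      intro s₀
      obtain ⟨zz, hzz⟩ := s₀.property
      have hcond : q.toFun zz = D.kL.toFun s₀ := hzz
      exact ⟨⟨(zz, s₀), hcond⟩, rfl⟩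
    have hsplit : T.shriek qL (T.res cL (α * β))
        = T.shriek qL (T.res cL α) * T.shriek qL (T.res cL β) := by
      rw [T.shriek_surj qL hqLsurj, T.shriek_surj qL hqLsurj, T.shriek_surj qL hqLsurj,
        map_mul, map_mul]
    rw [hsplit]
    exact Ideal.subset_span (T.mem_mulSet_of_mul
      (hI.shriek_mem qL (hI.res_mem cL hαI)) (hJ.shriek_mem qL (hJ.res_mem cL hβJ)))
  -- right (complement) component is zero
  have hR : T.res D.kR (T.shriek q (α * β)) = 0 := by
    rw [T.res_shriek q D.kR]
    apply T.shriek_isEmpty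
    constructor
    rintro ⟨⟨zz, s₀⟩, hcond⟩
    exact s₀.property ⟨zz, hcond⟩
  obtain ⟨aL, aR, hsum, haL, haR⟩ := D.decompose T (T.shriek q (α * β))
  rw [hsum]
  have haL' : aL ∈ T.mulIdl I J D.L :=
    Ideal.span_le.mpr (Set.singleton_subset_iff.mpr hL) haL
  have haR' : aR = 0 := by
    rw [hR] at haR
    rw [Ideal.span_singleton_eq_bot.mpr rfl] at haR
    simpa using haR
  rw [haR', map_zero, add_zero]
  exact T.mulIdl_tr D.kL haL'

/-- Shriek of a sum of `k` generators of the product ideal lands in the product ideal. -/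
theorem shriek_mulSet_sum {I J : ∀ X : GSet G, Ideal (T.obj X)} (hI : T.IsIdeal I)
    (hJ : T.IsIdeal J) : ∀ (k : ℕ) {X Y : GSet G} (g : GSetHom X Y)
    (l : List (T.obj X)), l.length ≤ k → (∀ w ∈ l, w ∈ T.mulSet I J X) →
    T.shriek g l.sum ∈ T.mulIdl I J Y := by
  intro k
  induction k with
  | zero =>
    intro X Y g l hlen hl
    have : l = [] := List.eq_nil_of_length_eq_zero (Nat.le_zero.mp hlen)
    subst this
    rw [List.sum_nil, show T.shriek g (0 : T.obj X) = 0 by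
      unfold TambaraFunctor.shriek; rw [sub_self]]
    exact zero_mem _
  | succ k ih =>
    intro X Y g l hlen hl
    match l with
    | [] =>
      rw [List.sum_nil]
      rw [show T.shriek g (0 : T.obj X) = 0 by
        unfold TambaraFunctor.shriek; rw [sub_self]]
      exact zero_mem _
    | w :: t =>
      rw [List.sum_cons]
      apply T.recip g w t.sum (T.mulIdl I J)
      · intro Z V gg z hz
        exact T.mulIdl_tr gg hz
      · intro Z₁ Z₂ V r s qq
        exact T.shriek_mulSet hI hJ qq
          (T.mulSet_tr s (T.mulSet_res (T.resC_of_isIdeal hI) (T.resC_of_isIdeal hJ) r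
            (hl w (by simp))))
      · intro Z₁ Z₂ V r s qq
        have : T.tr s (T.res r t.sum) = ((t.map (T.res r)).map (T.tr s)).sum := by
          rw [← map_list_sum, ← map_list_sum]
        rw [this]
        apply ih qq
        · simpa using Nat.le_of_succ_le_succ (by simpa using hlen)
        · intro u hu
          simp only [List.mem_map] at hu
          obtain ⟨v, ⟨v', hv', rfl⟩, rfl⟩ := hu
          exact T.mulSet_tr s (T.mulSet_res (T.resC_of_isIdeal hI)
            (T.resC_of_isIdeal hJ) r (hl v' (by simp [hv'])))

theorem mulIdl_isIdeal {I J : ∀ X : GSet G, Ideal (T.obj X)} (hI : T.IsIdeal I)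
    (hJ : T.IsIdeal J) : T.IsIdeal (T.mulIdl I J) := by
  refine ⟨?_, ?_, ?_⟩
  · intro X Y f z hz
    exact T.mulIdl_res (T.resC_of_isIdeal hI) (T.resC_of_isIdeal hJ) f hz
  · intro X Y f z hz
    exact T.mulIdl_tr f hz
  · intro X Y f z hz
    rw [T.mem_mulIdl_iff] at hz
    obtain ⟨l, hl, rfl⟩ := hz
    exact T.shriek_mulSet_sum hI hJ l.length f l le_rfl hl

end TambaraFunctor

namespace TambaraFunctor

variable {G : Type} [Group G] (T : TambaraFunctor G)

theorem sup_isIdeal {A B : ∀ X : GSet G, Ideal (T.obj X)} (hA : T.IsIdeal A)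
    (hB : T.IsIdeal B) : T.IsIdeal (fun X => A X ⊔ B X) := by
  refine ⟨?_, ?_, ?_⟩
  · intro X Y f z hz
    obtain ⟨u, hu, v, hv, rfl⟩ := Submodule.mem_sup.1 hz
    rw [map_add]
    exact add_mem (Submodule.mem_sup_left (hA.res_mem f hu))
      (Submodule.mem_sup_right (hB.res_mem f hv))
  · intro X Y f z hz
    obtain ⟨u, hu, v, hv, rfl⟩ := Submodule.mem_sup.1 hz
    rw [map_add]
    exact add_mem (Submodule.mem_sup_left (hA.tr_mem f hu))
      (Submodule.mem_sup_right (hB.tr_mem f hv))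
  · intro X Y f z hz
    obtain ⟨u, hu, v, hv, rfl⟩ := Submodule.mem_sup.1 hz
    apply T.recip f u v (fun X => A X ⊔ B X)
    · intro Z V g z' hz'
      obtain ⟨u', hu', v', hv', rfl⟩ := Submodule.mem_sup.1 hz'
      rw [map_add]
      exact add_mem (Submodule.mem_sup_left (hA.tr_mem g hu'))
        (Submodule.mem_sup_right (hB.tr_mem g hv'))
    · intro Z₁ Z₂ V r s q
      exact Submodule.mem_sup_left
        (hA.shriek_mem q (hA.tr_mem s (hA.res_mem r hu)))
    · intro Z₁ Z₂ V r s q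
      exact Submodule.mem_sup_right
        (hB.shriek_mem q (hB.tr_mem s (hB.res_mem r hv)))

theorem mulIdl_sup_left_le (A B K : ∀ X : GSet G, Ideal (T.obj X)) (X : GSet G) :
    T.mulIdl (fun Z => A Z ⊔ B Z) K X ≤ T.mulIdl A K X ⊔ T.mulIdl B K X := by
  rw [TambaraFunctor.mulIdl, Ideal.span_le]
  rintro z ⟨W, p, s, c, hs, hc, rfl⟩
  obtain ⟨u, hu, v, hv, rfl⟩ := Submodule.mem_sup.1 hs
  rw [add_mul, map_add]
  exact add_mem (Submodule.mem_sup_left (Ideal.subset_span ⟨W, p, u, c, hu, hc, rfl⟩))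
    (Submodule.mem_sup_right (Ideal.subset_span ⟨W, p, v, c, hv, hc, rfl⟩))

theorem mulIdl_iSup_right_le (A : ∀ X : GSet G, Ideal (T.obj X)) {κ : Type}
    (L : κ → ∀ X : GSet G, Ideal (T.obj X)) (X : GSet G) :
    T.mulIdl A (fun Z => ⨆ i, L i Z) X ≤ ⨆ i, T.mulIdl A (L i) X := by
  rw [TambaraFunctor.mulIdl, Ideal.span_le]
  rintro z ⟨W, p, s, c, hs, hc, rfl⟩
  refine Submodule.iSup_induction (fun i => L i W)
    (motive := fun c' => T.tr p (s * c') ∈ ⨆ i, T.mulIdl A (L i) X) hc ?_ ?_ ?_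
  · intro i c' hc'
    exact le_iSup (fun i => T.mulIdl A (L i) X) i
      (Ideal.subset_span ⟨W, p, s, c', hs, hc', rfl⟩)
  · show T.tr p (s * 0) ∈ _
    rw [mul_zero, map_zero]; exact zero_mem _
  · intro c₁ c₂ h₁ h₂
    show T.tr p (s * (c₁ + c₂)) ∈ _
    rw [mul_add, map_add]
    exact add_mem h₁ h₂

theorem forall₂_replicate {R : (∀ X : GSet G, Ideal (T.obj X)) →
    (∀ X : GSet G, Ideal (T.obj X)) → Prop} {A B : ∀ X : GSet G, Ideal (T.obj X)}
    (h : R A B) (n : ℕ) : List.Forall₂ R (List.replicate n A) (List.replicate n B) := by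
  induction n with
  | zero => exact List.Forall₂.nil
  | succ n ih => exact List.Forall₂.cons h ih

/-- The binomial bound: a power of a sup of two ideal families is contained in the sup
of mixed products. -/
theorem binom_le {A B : ∀ X : GSet G, Ideal (T.obj X)} (hA : T.IsIdeal A)
    (hB : T.IsIdeal B) : ∀ (N : ℕ) (X : GSet G),
    T.mulMulti (List.replicate N (fun Z => A Z ⊔ B Z)) X ≤
      ⨆ i : Fin (N + 1),
        T.mulMulti (List.replicate i.val A ++ List.replicate (N - i.val) B) X := by
  have hresc : ∀ (i j : ℕ) (C : ∀ X : GSet G, Ideal (T.obj X)),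
      C ∈ (List.replicate i A ++ List.replicate j B) → T.ResC C := by
    intro i j C hC
    rcases List.mem_append.1 hC with h | h
    · rw [List.eq_of_mem_replicate h]; exact T.resC_of_isIdeal hA
    · rw [List.eq_of_mem_replicate h]; exact T.resC_of_isIdeal hB
  intro N
  induction N with
  | zero =>
    intro X
    refine le_trans ?_ (le_iSup _ (0 : Fin 1))
    exact le_rfl
  | succ N ih =>
    intro X
    show T.mulIdl _ (T.mulMulti (List.replicate N _)) X ≤ _
    calc T.mulIdl (fun Z => A Z ⊔ B Z) (T.mulMulti (List.replicate N (fun Z => A Z ⊔ B Z))) X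
        ≤ T.mulIdl (fun Z => A Z ⊔ B Z) (fun Z => ⨆ i : Fin (N + 1),
            T.mulMulti (List.replicate i.val A ++ List.replicate (N - i.val) B) Z) X :=
          T.mulIdl_mono (fun _ => le_rfl) (fun Z => ih Z) X
      _ ≤ T.mulIdl A (fun Z => ⨆ i : Fin (N + 1),
            T.mulMulti (List.replicate i.val A ++ List.replicate (N - i.val) B) Z) X ⊔
          T.mulIdl B (fun Z => ⨆ i : Fin (N + 1),
            T.mulMulti (List.replicate i.val A ++ List.replicate (N - i.val) B) Z) X :=
          T.mulIdl_sup_left_le A B _ X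
      _ ≤ _ := ?_
    apply sup_le
    · refine le_trans (T.mulIdl_iSup_right_le A _ X) (iSup_le ?_)
      intro i
      have key : T.mulIdl A (T.mulMulti (List.replicate i.val A ++
          List.replicate (N - i.val) B)) X =
          T.mulMulti (List.replicate (i.val + 1) A ++ List.replicate (N + 1 - (i.val + 1)) B) X := by
        rw [Nat.succ_sub_succ]
        rfl
      rw [key]
      exact le_iSup (fun j : Fin (N + 2) => T.mulMulti
        (List.replicate j.val A ++ List.replicate (N + 1 - j.val) B) X)
        ⟨i.val + 1, by omega⟩
    · refine le_trans (T.mulIdl_iSup_right_le B _ X) (iSup_le ?_)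
      intro i
      have hiN : i.val ≤ N := by omega
      have key : T.mulIdl B (T.mulMulti (List.replicate i.val A ++
          List.replicate (N - i.val) B)) X =
          T.mulMulti (List.replicate i.val A ++ List.replicate (N + 1 - i.val) B) X := by
        show T.mulMulti (B :: (List.replicate i.val A ++ List.replicate (N - i.val) B)) X = _
        have hperm : (B :: (List.replicate i.val A ++ List.replicate (N - i.val) B)).Perm
            (List.replicate i.val A ++ (B :: List.replicate (N - i.val) B)) :=
          List.perm_middle.symm
        rw [T.mulMulti_perm hperm ?hres]
        case hres =>
          intro C hC
          rcases List.mem_cons.1 hC with h | h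
          · rw [h]; exact T.resC_of_isIdeal hB
          · exact hresc _ _ C h
        rw [show (B :: List.replicate (N - i.val) B) = List.replicate (N - i.val + 1) B by
          rw [List.replicate_succ]]
        rw [show N - i.val + 1 = N + 1 - i.val by omega]
      rw [key]
      exact le_iSup (fun j : Fin (N + 2) => T.mulMulti
        (List.replicate j.val A ++ List.replicate (N + 1 - j.val) B) X)
        ⟨i.val, by omega⟩

end TambaraFunctor

namespace TambaraFunctor

variable {G : Type} [Group G] (T : TambaraFunctor G)

theorem radicalSet_of_mem_principal {I : ∀ X : GSet G, Ideal (T.obj X)} {X W : GSet G}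
    {a : T.obj X} {c : T.obj W} (ha : a ∈ T.radicalSet I X)
    (hc : c ∈ T.principal X a W) : c ∈ T.radicalSet I W := by
  obtain ⟨n, hn0, hn⟩ := ha
  refine ⟨n, hn0, fun Y => ?_⟩
  refine le_trans (T.mulMulti_mono (T.forall₂_replicate
    (R := fun A B => ∀ X, A X ≤ B X)
    (fun Z => T.principal_le (T.principal_isIdeal a) hc Z) n) Y) (hn Y)

theorem radicalSet_zero {I : ∀ X : GSet G, Ideal (T.obj X)} (hI : T.IsIdeal I)
    (X : GSet G) : (0 : T.obj X) ∈ T.radicalSet I X := by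
  refine ⟨1, one_pos, fun Y => ?_⟩
  show T.mulIdl (T.principal X 0) (T.mulMulti []) Y ≤ I Y
  exact T.mulIdl_le_left hI (T.principal_le hI (zero_mem _)) Y

theorem radicalSet_add {I : ∀ X : GSet G, Ideal (T.obj X)} {X : GSet G} {a b : T.obj X}
    (ha : a ∈ T.radicalSet I X) (hb : b ∈ T.radicalSet I X) :
    a + b ∈ T.radicalSet I X := by
  obtain ⟨n, hn0, hn⟩ := ha
  obtain ⟨m, hm0, hm⟩ := hb
  have hS : T.IsIdeal (fun Z => T.principal X a Z ⊔ T.principal X b Z) :=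
    T.sup_isIdeal (T.principal_isIdeal a) (T.principal_isIdeal b)
  refine ⟨n + m, by omega, fun Y => ?_⟩
  have h1 : ∀ Z, T.principal X (a + b) Z ≤ T.principal X a Z ⊔ T.principal X b Z :=
    T.principal_le hS (add_mem (Submodule.mem_sup_left (T.mem_principal_self a))
      (Submodule.mem_sup_right (T.mem_principal_self b)))
  refine le_trans (T.mulMulti_mono (T.forall₂_replicate
    (R := fun A B => ∀ X, A X ≤ B X) h1 (n + m)) Y) ?_
  refine le_trans (T.binom_le (T.principal_isIdeal a) (T.principal_isIdeal b) (n + m) Y) ?_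
  apply iSup_le
  intro i
  have hile : i.val ≤ n + m := by omega
  by_cases hcase : n ≤ i.val
  · have e : List.replicate i.val (T.principal X a)
        = List.replicate n (T.principal X a) ++
          List.replicate (i.val - n) (T.principal X a) := by
      rw [← List.replicate_add, Nat.add_sub_cancel' hcase]
    rw [e, List.append_assoc]
    exact le_trans (T.mulMulti_append_le _ _ Y) (hn Y)
  · have hm' : m ≤ n + m - i.val := by omega
    have hperm : (List.replicate i.val (T.principal X a) ++
        List.replicate (n + m - i.val) (T.principal X b)).Perm
        (List.replicate (n + m - i.val) (T.principal X b) ++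
          List.replicate i.val (T.principal X a)) :=
      List.perm_append_comm
    rw [T.mulMulti_perm hperm ?hres]
    case hres =>
      intro C hC
      rcases List.mem_append.1 hC with h | h
      · rw [List.eq_of_mem_replicate h]
        exact T.resC_of_isIdeal (T.principal_isIdeal a)
      · rw [List.eq_of_mem_replicate h]
        exact T.resC_of_isIdeal (T.principal_isIdeal b)
    have e : List.replicate (n + m - i.val) (T.principal X b)
        = List.replicate m (T.principal X b) ++
          List.replicate (n + m - i.val - m) (T.principal X b) := by
      rw [← List.replicate_add, Nat.add_sub_cancel' hm']
    rw [e, List.append_assoc]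
    exact le_trans (T.mulMulti_append_le _ _ Y) (hm Y)

theorem radicalSet_smul {I : ∀ X : GSet G, Ideal (T.obj X)} {X : GSet G} (c : T.obj X)
    {a : T.obj X} (ha : a ∈ T.radicalSet I X) : c * a ∈ T.radicalSet I X :=
  T.radicalSet_of_mem_principal ha (Ideal.mul_mem_left _ c (T.mem_principal_self a))

/-- The radical as an ideal. -/
theorem radical_exists {I : ∀ X : GSet G, Ideal (T.obj X)} (hI : T.IsIdeal I) :
    ∃ K : ∀ X : GSet G, Ideal (T.obj X), T.IsIdeal K ∧
      ∀ X : GSet G, (K X : Set (T.obj X)) = T.radicalSet I X := by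
  refine ⟨fun X =>
    { carrier := T.radicalSet I X
      add_mem' := fun ha hb => T.radicalSet_add ha hb
      zero_mem' := T.radicalSet_zero hI X
      smul_mem' := fun c a ha => by
        rw [smul_eq_mul]
        exact T.radicalSet_smul c ha }, ⟨?_, ?_, ?_⟩, fun X => rfl⟩
  · intro X Y f a ha
    exact T.radicalSet_of_mem_principal ha
      ((T.principal_isIdeal a).res_mem f (T.mem_principal_self a))
  · intro X Y f a ha
    exact T.radicalSet_of_mem_principal ha
      ((T.principal_isIdeal a).tr_mem f (T.mem_principal_self a))
  · intro X Y f a ha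
    exact T.radicalSet_of_mem_principal ha
      ((T.principal_isIdeal a).shriek_mem f (T.mem_principal_self a))

theorem le_radicalSet {I : ∀ X : GSet G, Ideal (T.obj X)} (hI : T.IsIdeal I)
    (X : GSet G) : (I X : Set (T.obj X)) ⊆ T.radicalSet I X := by
  intro a ha
  refine ⟨1, one_pos, fun Y => ?_⟩
  show T.mulIdl (T.principal X a) (T.mulMulti []) Y ≤ I Y
  exact T.mulIdl_le_left hI (T.principal_le hI ha) Y

end TambaraFunctor

namespace TambaraFunctor

variable {G : Type} [Group G] (T : TambaraFunctor G)

theorem mulMulti_isIdeal (l : List (∀ X : GSet G, Ideal (T.obj X)))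
    (hl : ∀ A ∈ l, T.IsIdeal A) : T.IsIdeal (T.mulMulti l) := by
  induction l with
  | nil => exact T.top_isIdeal
  | cons A t ih =>
    exact T.mulIdl_isIdeal (hl A (by simp)) (ih (fun B hB => hl B (by simp [hB])))

theorem orbit_decomp {P : ∀ X : GSet G, Ideal (T.obj X)} (hP : T.IsIdeal P) :
    ∀ (n : ℕ) (X : GSet G), Nat.card X.carrier ≤ n → ∀ (x : T.obj X),
    (∀ (W : GSet G), W.IsTransitive → ∀ c ∈ T.principal X x W, c ∈ P W) →
    x ∈ P X := by
  intro n
  induction n with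
  | zero =>
    intro X hcard x _
    haveI : Finite X.carrier := X.finite
    have hempty : IsEmpty X.carrier := by
      rcases Nat.card_eq_zero.mp (Nat.le_zero.mp hcard) with h | h
      · exact h
      · exact absurd h (not_infinite_iff_finite.mpr ‹_›)
    have := T.obj_subsingleton hempty
    rw [Subsingleton.elim x 0]
    exact zero_mem _
  | succ n ih =>
    intro X hcard x hx
    by_cases hcle : Nat.card X.carrier ≤ n
    · exact ih X hcle x hx
    haveI : Finite X.carrier := X.finite
    have hpos : 0 < Nat.card X.carrier := by omega
    have hne : Nonempty X.carrier := (Nat.card_pos_iff.mp hpos).1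
    by_cases htrans : MulAction.IsPretransitive G X.carrier
    · exact hx X ⟨hne, htrans⟩ x (T.mem_principal_self x)
    · have hnt : ¬ ∀ (u v : X.carrier), ∃ g : G, g • u = v := by
        intro h; exact htrans ⟨h⟩
      push_neg at hnt
      obtain ⟨u₀, v₀, hv₀⟩ := hnt
      have hpinv : ∀ (g : G) z, (∃ g' : G, g' • u₀ = z) →
          ∃ g' : G, g' • u₀ = g • z := by
        rintro g z ⟨g', rfl⟩; exact ⟨g * g', mul_smul g g' u₀⟩
      set D := decompOf X (fun z => ∃ g' : G, g' • u₀ = z) hpinv with hD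
      have hcardL : Nat.card D.L.carrier ≤ n := by
        have h1 : Nat.card D.L.carrier < Nat.card X.carrier :=
          Finite.card_subtype_lt (p := fun z => ∃ g' : G, g' • u₀ = z)
            (not_exists.mpr hv₀)
        omega
      have hcardR : Nat.card D.R.carrier ≤ n := by
        have h1 : Nat.card D.R.carrier < Nat.card X.carrier :=
          Finite.card_subtype_lt (p := fun z => ¬ ∃ g' : G, g' • u₀ = z)
            (not_not_intro ⟨1, one_smul _ _⟩)
        omega
      obtain ⟨aL, aR, hsum, haL, haR⟩ := D.decompose T x
      have haL' : aL ∈ T.principal X x D.L :=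
        Ideal.span_le.mpr (Set.singleton_subset_iff.mpr
          ((T.principal_isIdeal x).res_mem D.kL (T.mem_principal_self x))) haL
      have haR' : aR ∈ T.principal X x D.R :=
        Ideal.span_le.mpr (Set.singleton_subset_iff.mpr
          ((T.principal_isIdeal x).res_mem D.kR (T.mem_principal_self x))) haR
      have hL : aL ∈ P D.L := by
        apply ih D.L hcardL aL
        intro W hW c hc
        exact hx W hW c (T.principal_le (T.principal_isIdeal x) haL' W hc)
      have hR : aR ∈ P D.R := by
        apply ih D.R hcardR aR
        intro W hW c hc
        exact hx W hW c (T.principal_le (T.principal_isIdeal x) haR' W hc)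
      rw [hsum]
      exact add_mem (hP.tr_mem D.kL hL) (hP.tr_mem D.kR hR)

theorem prime_power {P : ∀ X : GSet G, Ideal (T.obj X)} (hP : T.IsPrime P) :
    ∀ (n : ℕ), 0 < n → ∀ (W : GSet G), W.IsTransitive → ∀ (b : T.obj W),
      (∀ Z, T.mulMulti (List.replicate n (T.principal W b)) Z ≤ P Z) → b ∈ P W := by
  intro n
  induction n with
  | zero => intro h; exact absurd h (lt_irrefl 0)
  | succ n ih =>
    intro _ W hW b hpow
    by_cases hn0 : n = 0
    · subst hn0
      apply hpow W
      show b ∈ T.mulIdl (T.principal W b) (T.mulMulti []) W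
      exact Ideal.subset_span ⟨W, GSetHom.id W, b, 1, T.mem_principal_self b,
        Submodule.mem_top, by rw [mul_one, T.tr_id]⟩
    · have hmi : T.IsIdeal (T.mulMulti (List.replicate n (T.principal W b))) := by
        apply T.mulMulti_isIdeal
        intro A hA
        rw [List.eq_of_mem_replicate hA]
        exact T.principal_isIdeal b
      by_cases hbP : b ∈ P W
      · exact hbP
      · have htrans : ∀ Z, Z.IsTransitive →
            T.mulMulti (List.replicate n (T.principal W b)) Z ≤ P Z := by
          intro Z hZ c hc
          have hcc : ∀ V, T.mulIdl (T.principal W b) (T.principal Z c) V ≤ P V := by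
            intro V
            exact le_trans (T.mulIdl_mono (fun _ => le_rfl)
              (T.principal_le hmi hc) V) (hpow V)
          rcases hP.mem_or_mem hW hZ hcc with h | h
          · exact absurd h hbP
          · exact h
        have hall : ∀ Z, T.mulMulti (List.replicate n (T.principal W b)) Z ≤ P Z := by
          intro Z c hc
          apply T.orbit_decomp hP.isIdeal (Nat.card Z.carrier) Z le_rfl c
          intro V hV e he
          exact htrans V hV (T.principal_le hmi hc V he)
        exact ih (by omega) W hW b hall

theorem radical_le_prime {I P : ∀ X : GSet G, Ideal (T.obj X)}
    (hP : T.IsPrime P) (hIP : ∀ X, I X ≤ P X) (X : GSet G) :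
    T.radicalSet I X ⊆ ↑(P X) := by
  rintro a ⟨n, hn0, hn⟩
  apply T.orbit_decomp hP.isIdeal (Nat.card X.carrier) X le_rfl a
  intro W hW c hc
  apply T.prime_power hP n hn0 W hW c
  intro Z
  refine le_trans (T.mulMulti_mono (T.forall₂_replicate
    (R := fun A B => ∀ X, A X ≤ B X)
    (T.principal_le (T.principal_isIdeal a) hc) n) Z) ?_
  exact le_trans (hn Z) (hIP Z)

end TambaraFunctor
/-- `√𝔦` is an ideal containing `𝔦`, it is contained in every prime ideal
containing `𝔦`, and `V(√𝔦) = V(𝔦)` in `Spec(T)`. -/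
theorem radical_isIdeal (G : Type) [Group G] [Finite G] (T : TambaraFunctor G)
    (hT : ∃ X : GSet G, Nontrivial (T.obj X))
    (I : ∀ X : GSet G, Ideal (T.obj X)) (hI : T.IsIdeal I) :
    (∃ K : ∀ X : GSet G, Ideal (T.obj X), T.IsIdeal K ∧
      ∀ X : GSet G, (K X : Set (T.obj X)) = T.radicalSet I X) ∧
    (∀ X : GSet G, (I X : Set (T.obj X)) ⊆ T.radicalSet I X) ∧
    (∀ P : ∀ X : GSet G, Ideal (T.obj X), T.IsPrime P → (∀ X, I X ≤ P X) →
      ∀ X : GSet G, T.radicalSet I X ⊆ ↑(P X)) ∧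
    ({ P : ∀ X : GSet G, Ideal (T.obj X) | T.IsPrime P ∧ ∀ X, I X ≤ P X } =
     { P : ∀ X : GSet G, Ideal (T.obj X) | T.IsPrime P ∧
        ∀ X : GSet G, T.radicalSet I X ⊆ ↑(P X) }) := by
  obtain ⟨K, hK, hKeq⟩ := T.radical_exists hI
  refine ⟨⟨K, hK, hKeq⟩, T.le_radicalSet hI, fun P hP hIP X => T.radical_le_prime hP hIP X, ?_⟩
  ext P
  simp only [Set.mem_setOf_eq]
  constructor
  · rintro ⟨hP, hIP⟩
    exact ⟨hP, fun X => T.radical_le_prime hP hIP X⟩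
  · rintro ⟨hP, hrad⟩
    refine ⟨hP, fun X a ha => hrad X (T.le_radicalSet hI X ha)⟩
end
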